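/- arXiv:1605.00035 — 2 statements merged into one kernel-verified Lean document; each statement's English description precedes it below -/
import Mathlib

section
/- Let Ω = (−L, L) × (−h, h) be a rectangle with boundary ∂Ω = Γ₁ ∪ Γ₂, where Γ₁ consists of the top and left sides and Γ₂ of the bottom and right sides. Let f : ∂Ω → ℝ be continuous with f strictly monotone along Γ₁ and along Γ₂ (with respect to arclength), attaining each value in (min f, max f) exactly once on each Γᵢ. For t ∈ (min f, max f), let ℓ^t be the segment joining the point x^t ∈ Γ₁ with f(x^t) = t to the point y^t ∈ Γ₂ with f(y^t) = t. Then for every z ∈ Ω there exists a unique t such that z ∈ ℓ^t. -/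
open MeasureTheory Set Filter Metric Bornology
open scoped ENNReal symmDiff Topology

noncomputable section

abbrev E2 := EuclideanSpace ℝ (Fin 2)


/-- Points strictly between an interior point and a weakly-interior point of a slab are interior. -/
lemma affine_between (a d lam r ρ c : ℝ) (h1 : |a + lam * d| < c) (h2 : |a + r * d| ≤ c)
    (h3 : lam < ρ ∧ ρ < r ∨ r < ρ ∧ ρ < lam) : |a + ρ * d| < c := by
  have hrl : r - lam ≠ 0 := by rcases h3 with ⟨h3a, h3b⟩ | ⟨h3a, h3b⟩ <;> intro hc <;> nlinarith
  set μ := (r - ρ) / (r - lam) with hμ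
  have hμ0 : 0 < μ := by
    rcases h3 with ⟨h3a, h3b⟩ | ⟨h3a, h3b⟩
    · exact div_pos (by linarith) (by linarith)
    · exact div_pos_of_neg_of_neg (by linarith) (by linarith)
  have hμ1 : μ < 1 := by
    rw [hμ]
    rcases h3 with ⟨h3a, h3b⟩ | ⟨h3a, h3b⟩
    · rw [div_lt_one (by linarith)]; linarith
    · rw [div_lt_one_of_neg (by linarith)]; linarith
  have key : a + ρ * d = μ * (a + lam * d) + (1 - μ) * (a + r * d) := by
    rw [hμ, div_mul_eq_mul_div, one_sub_div hrl, div_mul_eq_mul_div, ← add_div,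
      eq_div_iff hrl]
    ring
  rw [key]
  rw [abs_lt] at h1 ⊢
  rw [abs_le] at h2
  constructor <;> nlinarith [h1.1, h1.2, h2.1, h2.2]

/-- a 2D cross-product-zero gives a linear parametrization. -/
lemma cross_param (d0 d1 e0 e1 : ℝ) (hd : ¬(d0 = 0 ∧ d1 = 0))
    (hc : d0 * e1 - d1 * e0 = 0) : ∃ α, e0 = α * d0 ∧ e1 = α * d1 := by
  by_cases h0 : d0 = 0
  · have h1 : d1 ≠ 0 := fun hc' => hd ⟨h0, hc'⟩
    refine ⟨e1 / d1, ?_, by field_simp⟩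
    have he0 : e0 = 0 := by
      have h' : d1 * e0 = 0 := by rw [h0] at hc; linarith
      rcases mul_eq_zero.mp h' with h | h
      · exact absurd h h1
      · exact h
    simp [he0, h0]
  · refine ⟨e0 / d0, by field_simp, ?_⟩
    field_simp
    linarith [hc]

/-- If an interior point of the rectangle is on the line through two boundary points,
then it is strictly between them. -/
lemma seg_param (L h : ℝ) (z0 z1 p0 p1 q0 q1 : ℝ)
    (hz0 : |z0| < L) (hz1 : |z1| < h)
    (hp0 : |p0| ≤ L) (hp1 : |p1| ≤ h) (hq0 : |q0| ≤ L) (hq1 : |q1| ≤ h)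
    (hpΩ : ¬(|p0| < L ∧ |p1| < h)) (hqΩ : ¬(|q0| < L ∧ |q1| < h))
    (hd : ¬(q0 - p0 = 0 ∧ q1 - p1 = 0))
    (hc : (q0 - p0) * (z1 - p1) - (q1 - p1) * (z0 - p0) = 0) :
    ∃ lam, 0 < lam ∧ lam < 1 ∧ z0 = p0 + lam * (q0 - p0) ∧ z1 = p1 + lam * (q1 - p1) := by
  obtain ⟨α, hα0, hα1⟩ := cross_param (q0 - p0) (q1 - p1) (z0 - p0) (z1 - p1) hd hc
  have hz0' : z0 = p0 + α * (q0 - p0) := by linarith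
  have hz1' : z1 = p1 + α * (q1 - p1) := by linarith
  refine ⟨α, ?_, ?_, hz0', hz1'⟩
  · rcases lt_trichotomy α 0 with hlt | heq | hgt
    · exfalso
      -- p (param 0) is strictly between z (param α, interior) and q (param 1)
      have b0 : |p0 + 0 * (q0 - p0)| < L :=
        affine_between p0 (q0 - p0) α 1 0 L (by rw [← hz0']; exact hz0)
          (by simpa using hq0) (Or.inl ⟨hlt, by norm_num⟩)
      have b1 : |p1 + 0 * (q1 - p1)| < h :=
        affine_between p1 (q1 - p1) α 1 0 h (by rw [← hz1']; exact hz1)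
          (by simpa using hq1) (Or.inl ⟨hlt, by norm_num⟩)
      exact hpΩ ⟨by simpa using b0, by simpa using b1⟩
    · exfalso
      rw [heq] at hz0' hz1'
      simp at hz0' hz1'
      exact hpΩ ⟨hz0' ▸ hz0, hz1' ▸ hz1⟩
    · exact hgt
  · rcases lt_trichotomy α 1 with hlt | heq | hgt
    · exact hlt
    · exfalso
      rw [heq] at hz0' hz1'
      have e0 : z0 = q0 := by linarith
      have e1 : z1 = q1 := by linarith
      exact hqΩ ⟨e0 ▸ hz0, e1 ▸ hz1⟩
    · exfalso
      have b0 : |p0 + 1 * (q0 - p0)| < L :=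
        affine_between p0 (q0 - p0) α 0 1 L (by rw [← hz0']; exact hz0)
          (by simpa using hp0) (Or.inr ⟨by norm_num, hgt⟩)
      have b1 : |p1 + 1 * (q1 - p1)| < h :=
        affine_between p1 (q1 - p1) α 0 1 h (by rw [← hz1']; exact hz1)
          (by simpa using hp1) (Or.inr ⟨by norm_num, hgt⟩)
      exact hqΩ ⟨by rw [show q0 = p0 + 1 * (q0-p0) by ring]; exact b0,
        by rw [show q1 = p1 + 1 * (q1-p1) by ring]; exact b1⟩

/-- Any boundary point on the line through a chord whose interior contains an interior
point must be one of the chord's endpoints. -/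
lemma line_pt (L h : ℝ) (z0 z1 p0 p1 q0 q1 w0 w1 : ℝ)
    (hz0 : |z0| < L) (hz1 : |z1| < h)
    (hp0 : |p0| ≤ L) (hp1 : |p1| ≤ h) (hq0 : |q0| ≤ L) (hq1 : |q1| ≤ h)
    (hw0 : |w0| ≤ L) (hw1 : |w1| ≤ h)
    (hpΩ : ¬(|p0| < L ∧ |p1| < h)) (hqΩ : ¬(|q0| < L ∧ |q1| < h))
    (hwΩ : ¬(|w0| < L ∧ |w1| < h))
    (lam : ℝ) (hl0 : 0 < lam) (hl1 : lam < 1)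
    (hzl0 : z0 = p0 + lam * (q0 - p0)) (hzl1 : z1 = p1 + lam * (q1 - p1))
    (hd : ¬(q0 - p0 = 0 ∧ q1 - p1 = 0))
    (hw : (q0 - p0) * (w1 - p1) - (q1 - p1) * (w0 - p0) = 0) :
    (w0 = p0 ∧ w1 = p1) ∨ (w0 = q0 ∧ w1 = q1) := by
  obtain ⟨α, hα0, hα1⟩ := cross_param (q0 - p0) (q1 - p1) (w0 - p0) (w1 - p1) hd hw
  have hw0' : w0 = p0 + α * (q0 - p0) := by linarith
  have hw1' : w1 = p1 + α * (q1 - p1) := by linarith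
  -- helper: anything with parameter strictly between lam and r (with point at r in K) is interior
  have betw : ∀ r ρ : ℝ, |p0 + r * (q0 - p0)| ≤ L → |p1 + r * (q1 - p1)| ≤ h →
      (lam < ρ ∧ ρ < r ∨ r < ρ ∧ ρ < lam) →
      |p0 + ρ * (q0 - p0)| < L ∧ |p1 + ρ * (q1 - p1)| < h := by
    intro r ρ hr0 hr1 hord
    exact ⟨affine_between p0 (q0 - p0) lam r ρ L (by rw [← hzl0]; exact hz0) hr0 hord,
      affine_between p1 (q1 - p1) lam r ρ h (by rw [← hzl1]; exact hz1) hr1 hord⟩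
  rcases lt_trichotomy α 0 with hc0 | hc0 | hc0
  · exfalso
    have := betw α 0 (by rw [← hw0']; exact hw0) (by rw [← hw1']; exact hw1)
      (Or.inr ⟨hc0, hl0⟩)
    exact hpΩ ⟨by simpa using this.1, by simpa using this.2⟩
  · left; constructor <;> [rw [hw0', hc0]; rw [hw1', hc0]] <;> ring
  rcases lt_trichotomy α lam with hcl | hcl | hcl
  · exfalso
    have := betw 0 α (by simpa using hp0) (by simpa using hp1) (Or.inr ⟨hc0, hcl⟩)
    exact hwΩ ⟨by rw [hw0']; exact this.1, by rw [hw1']; exact this.2⟩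
  · exfalso
    apply hwΩ
    rw [hw0', hcl, ← hzl0, hw1', hcl, ← hzl1]
    exact ⟨hz0, hz1⟩
  rcases lt_trichotomy α 1 with hc1 | hc1 | hc1
  · exfalso
    have := betw 1 α (by simpa using hq0) (by simpa using hq1) (Or.inl ⟨hcl, hc1⟩)
    exact hwΩ ⟨by rw [hw0']; exact this.1, by rw [hw1']; exact this.2⟩
  · right; constructor <;> [rw [hw0', hc1]; rw [hw1', hc1]] <;> ring
  · exfalso
    have := betw α 1 (by rw [← hw0']; exact hw0) (by rw [← hw1']; exact hw1)
      (Or.inl ⟨hl1, hc1⟩)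
    exact hqΩ ⟨by rw [show q0 = p0 + 1*(q0-p0) by ring]; exact this.1,
      by rw [show q1 = p1 + 1*(q1-p1) by ring]; exact this.2⟩

/-- Sign of the cross product near the bottom-left corner. -/
lemma signA (L h z0 z1 X0 X1 Y0 Y1 : ℝ) (hL : 0 < L) (hh : 0 < h)
    (hz0 : |z0| < L) (hz1 : |z1| < h)
    (hXΓ : (X1 = h ∧ |X0| ≤ L) ∨ (X0 = -L ∧ |X1| ≤ h))
    (hYΓ : (Y1 = -h ∧ |Y0| ≤ L) ∨ (Y0 = L ∧ |Y1| ≤ h))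
    (hXne : ¬(X0 = -L ∧ X1 = -h)) (hYne : ¬(Y0 = -L ∧ Y1 = -h))
    (hXnear : |X1 + h| < z1 + h) (hYnear : |Y0 + L| < z0 + L) :
    (Y0 - X0) * (z1 - X1) - (Y1 - X1) * (z0 - X0) > 0 := by
  rw [abs_lt] at hz0 hz1 hXnear hYnear
  have hXl : X0 = -L ∧ |X1| ≤ h := by
    rcases hXΓ with ⟨e, _⟩ | hx
    · exfalso; rw [e] at hXnear; nlinarith [hXnear.2]
    · exact hx
  have hYb : Y1 = -h ∧ |Y0| ≤ L := by
    rcases hYΓ with hy | ⟨e, _⟩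
    · exact hy
    · exfalso; rw [e] at hYnear; nlinarith [hYnear.2]
  obtain ⟨hX0, hX1⟩ := hXl
  obtain ⟨hY1, hY0⟩ := hYb
  rw [abs_le] at hX1 hY0
  have hX1' : -h < X1 := lt_of_le_of_ne hX1.1 (fun e => hXne ⟨hX0, e.symm⟩)
  have hY0' : -L < Y0 := lt_of_le_of_ne hY0.1 (fun e => hYne ⟨e.symm, hY1⟩)
  have hX1z : X1 < z1 := by linarith [hXnear.2]
  rw [hX0, hY1]
  nlinarith [mul_pos (by linarith : (0:ℝ) < Y0 + L) (by linarith : (0:ℝ) < z1 - X1),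
    mul_pos (by linarith : (0:ℝ) < h + X1) (by linarith : (0:ℝ) < z0 + L)]

/-- Sign of the cross product near the top-right corner. -/
lemma signB (L h z0 z1 X0 X1 Y0 Y1 : ℝ) (hL : 0 < L) (hh : 0 < h)
    (hz0 : |z0| < L) (hz1 : |z1| < h)
    (hXΓ : (X1 = h ∧ |X0| ≤ L) ∨ (X0 = -L ∧ |X1| ≤ h))
    (hYΓ : (Y1 = -h ∧ |Y0| ≤ L) ∨ (Y0 = L ∧ |Y1| ≤ h))
    (hXne : ¬(X0 = L ∧ X1 = h)) (hYne : ¬(Y0 = L ∧ Y1 = h))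
    (hXnear : |X0 - L| < L - z0) (hYnear : |Y1 - h| < h - z1) :
    (Y0 - X0) * (z1 - X1) - (Y1 - X1) * (z0 - X0) < 0 := by
  rw [abs_lt] at hz0 hz1 hXnear hYnear
  have hXt : X1 = h ∧ |X0| ≤ L := by
    rcases hXΓ with hx | ⟨e, _⟩
    · exact hx
    · exfalso; rw [e] at hXnear; nlinarith [hXnear.1]
  have hYr : Y0 = L ∧ |Y1| ≤ h := by
    rcases hYΓ with ⟨e, _⟩ | hy
    · exfalso; rw [e] at hYnear; nlinarith [hYnear.1]
    · exact hy
  obtain ⟨hX1, hX0⟩ := hXt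
  obtain ⟨hY0, hY1⟩ := hYr
  rw [abs_le] at hX0 hY1
  have hX0' : X0 < L := lt_of_le_of_ne hX0.2 (fun e => hXne ⟨e, hX1⟩)
  have hY1' : Y1 < h := lt_of_le_of_ne hY1.2 (fun e => hYne ⟨hY0, e⟩)
  have hX0z : z0 < X0 := by linarith [hXnear.1]
  rw [hX1, hY0]
  nlinarith [mul_pos (by linarith : (0:ℝ) < L - X0) (by linarith : (0:ℝ) < h - z1),
    mul_pos (by linarith : (0:ℝ) < h - Y1) (by linarith : (0:ℝ) < X0 - z0)]

/-- Find a point in the open interval near an endpoint where two functions are close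
to their endpoint values. -/
lemma near_endpoint (a b e : ℝ) (hab : a < b) (he : e = a ∨ e = b)
    (F G : ℝ → ℝ) (hF : ContinuousWithinAt F (Icc a b) e)
    (hG : ContinuousWithinAt G (Icc a b) e) (ε₁ ε₂ : ℝ) (hε₁ : 0 < ε₁) (hε₂ : 0 < ε₂) :
    ∃ s ∈ Ioo a b, |F s - F e| < ε₁ ∧ |G s - G e| < ε₂ := by
  have hU1 : {s | |F s - F e| < ε₁} ∈ nhdsWithin e (Icc a b) := by
    have : {x : ℝ | |x - F e| < ε₁} ∈ nhds (F e) := by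
      have := Metric.ball_mem_nhds (F e) hε₁
      simpa [Metric.ball, Real.dist_eq] using this
    exact hF this
  have hU2 : {s | |G s - G e| < ε₂} ∈ nhdsWithin e (Icc a b) := hG (by
    have := Metric.ball_mem_nhds (G e) hε₂
    simpa [Metric.ball, Real.dist_eq] using this)
  have hcl : e ∈ closure (Ioo a b) := by
    rw [closure_Ioo (ne_of_lt hab)]
    rcases he with rfl | rfl
    · exact ⟨le_refl _, le_of_lt hab⟩
    · exact ⟨le_of_lt hab, le_refl _⟩
  have hne : (nhdsWithin e (Ioo a b)).NeBot := mem_closure_iff_nhdsWithin_neBot.mp hcl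
  have hmono := nhdsWithin_mono e (Ioo_subset_Icc_self : Ioo a b ⊆ Icc a b)
  have hU : ({s | |F s - F e| < ε₁} ∩ {s | |G s - G e| < ε₂}) ∩ Ioo a b ∈
      nhdsWithin e (Ioo a b) :=
    Filter.inter_mem (hmono (Filter.inter_mem hU1 hU2)) self_mem_nhdsWithin
  obtain ⟨s, ⟨⟨h1, h2⟩, h3⟩⟩ := hne.nonempty_of_mem hU
  exact ⟨s, h3, h1, h2⟩

/-- IVT helper: a sign change inside an interval yields a zero inside. -/
lemma ivt_zero (T : ℝ) (g : ℝ → ℝ) (hg : ContinuousOn g (Icc 0 T))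
    (s₀ s₁ : ℝ) (hs₀ : s₀ ∈ Ioo 0 T) (hs₁ : s₁ ∈ Ioo 0 T)
    (h0 : 0 < g s₀) (h1 : g s₁ < 0) : ∃ s ∈ Ioo 0 T, g s = 0 := by
  rcases lt_trichotomy s₀ s₁ with hlt | heq | hgt
  · have sub : Icc s₀ s₁ ⊆ Icc 0 T := Icc_subset_Icc (le_of_lt hs₀.1) (le_of_lt hs₁.2)
    have := intermediate_value_Ioo' (le_of_lt hlt) (hg.mono sub) (a := s₀) (b := s₁)
    obtain ⟨s, hs, hgs⟩ := this ⟨h1, h0⟩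
    exact ⟨s, ⟨lt_trans hs₀.1 hs.1, lt_trans hs.2 hs₁.2⟩, hgs⟩
  · exact absurd (heq ▸ h0) (by linarith)
  · have sub : Icc s₁ s₀ ⊆ Icc 0 T := Icc_subset_Icc (le_of_lt hs₁.1) (le_of_lt hs₀.2)
    have := intermediate_value_Ioo (le_of_lt hgt) (hg.mono sub) (a := s₁) (b := s₀)
    obtain ⟨s, hs, hgs⟩ := this ⟨h1, h0⟩
    exact ⟨s, ⟨lt_trans hs₁.1 hs.1, lt_trans hs.2 hs₀.2⟩, hgs⟩


set_option maxHeartbeats 4000000 in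
/-- for the rectangle `Ω = (-L,L) × (-h,h)` with `∂Ω = Γ₁ ∪ Γ₂` (top-left and
bottom-right parts), `f` continuous on `∂Ω` and strictly monotone along each `Γᵢ`
(parametrized from the common corner where `f` is minimal to the one where it is maximal),
every point `z ∈ Ω` lies on exactly one segment `ℓᵗ` joining `xᵗ ∈ Γ₁` to `yᵗ ∈ Γ₂` with
`f(xᵗ) = f(yᵗ) = t`. -/
theorem rectangle_foliation_exists_unique
    (L h : ℝ) (hL : 0 < L) (hh : 0 < h)
    (Ω : Set E2) (hΩ : Ω = {p : E2 | |p 0| < L ∧ |p 1| < h})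
    (Γ₁ Γ₂ : Set E2)
    (hΓ₁ : Γ₁ = {p : E2 | (p 1 = h ∧ |p 0| ≤ L) ∨ (p 0 = -L ∧ |p 1| ≤ h)})
    (hΓ₂ : Γ₂ = {p : E2 | (p 1 = -h ∧ |p 0| ≤ L) ∨ (p 0 = L ∧ |p 1| ≤ h)})
    (f : E2 → ℝ) (hf : ContinuousOn f (Γ₁ ∪ Γ₂))
    (T₁ T₂ : ℝ) (hT₁ : 0 < T₁) (hT₂ : 0 < T₂)
    (γ₁ γ₂ : ℝ → E2)
    (hγ₁c : ContinuousOn γ₁ (Icc 0 T₁)) (hγ₂c : ContinuousOn γ₂ (Icc 0 T₂))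
    (hγ₁i : InjOn γ₁ (Icc 0 T₁)) (hγ₂i : InjOn γ₂ (Icc 0 T₂))
    (hγ₁im : γ₁ '' Icc 0 T₁ = Γ₁) (hγ₂im : γ₂ '' Icc 0 T₂ = Γ₂)
    (hends0 : γ₁ 0 = γ₂ 0) (hends1 : γ₁ T₁ = γ₂ T₂)
    (hmono₁ : StrictMonoOn (f ∘ γ₁) (Icc 0 T₁))
    (hmono₂ : StrictMonoOn (f ∘ γ₂) (Icc 0 T₂)) :
    ∀ z ∈ Ω, ∃! t : ℝ, t ∈ Ioo (f (γ₁ 0)) (f (γ₁ T₁)) ∧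
      ∃ p ∈ Γ₁, ∃ q ∈ Γ₂, f p = t ∧ f q = t ∧ z ∈ segment ℝ p q := by
  -- basic endpoints
  have hT₁0 : (0:ℝ) ∈ Icc 0 T₁ := ⟨le_refl _, le_of_lt hT₁⟩
  have hT₁T : T₁ ∈ Icc 0 T₁ := ⟨le_of_lt hT₁, le_refl _⟩
  have hT₂0 : (0:ℝ) ∈ Icc 0 T₂ := ⟨le_refl _, le_of_lt hT₂⟩
  have hT₂T : T₂ ∈ Icc 0 T₂ := ⟨le_of_lt hT₂, le_refl _⟩
  have hfPQ : f (γ₁ 0) < f (γ₁ T₁) := hmono₁ hT₁0 hT₁T hT₁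
  have hext : ∀ p q : E2, p 0 = q 0 → p 1 = q 1 → p = q := by
    intro p q h0 h1; ext i; fin_cases i <;> assumption
  -- boundary points belong to the closed rectangle but not the open one
  have hΓ₁K : ∀ p ∈ Γ₁, (|p 0| ≤ L ∧ |p 1| ≤ h) ∧ ¬(|p 0| < L ∧ |p 1| < h) := by
    intro p hp
    rw [hΓ₁] at hp
    rcases hp with ⟨e, hb⟩ | ⟨e, hb⟩
    · refine ⟨⟨hb, by rw [e, abs_of_pos hh]⟩, fun hcon => ?_⟩
      rw [e, abs_of_pos hh] at hcon
      exact lt_irrefl h hcon.2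
    · refine ⟨⟨by rw [e, abs_neg, abs_of_pos hL], hb⟩, fun hcon => ?_⟩
      rw [e, abs_neg, abs_of_pos hL] at hcon
      exact lt_irrefl L hcon.1
  have hΓ₂K : ∀ p ∈ Γ₂, (|p 0| ≤ L ∧ |p 1| ≤ h) ∧ ¬(|p 0| < L ∧ |p 1| < h) := by
    intro p hp
    rw [hΓ₂] at hp
    rcases hp with ⟨e, hb⟩ | ⟨e, hb⟩
    · refine ⟨⟨hb, by rw [e, abs_neg, abs_of_pos hh]⟩, fun hcon => ?_⟩
      rw [e, abs_neg, abs_of_pos hh] at hcon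
      exact lt_irrefl h hcon.2
    · refine ⟨⟨by rw [e, abs_of_pos hL], hb⟩, fun hcon => ?_⟩
      rw [e, abs_of_pos hL] at hcon
      exact lt_irrefl L hcon.1
  -- corner characterization
  have hcorner : ∀ p : E2, p ∈ Γ₁ → p ∈ Γ₂ →
      (p 0 = -L ∧ p 1 = -h) ∨ (p 0 = L ∧ p 1 = h) := by
    intro p hp1 hp2
    rw [hΓ₁] at hp1; rw [hΓ₂] at hp2
    rcases hp1 with ⟨e1, _⟩ | ⟨e1, _⟩ <;> rcases hp2 with ⟨e2, _⟩ | ⟨e2, _⟩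
    · exfalso; rw [e1] at e2; linarith
    · exact Or.inr ⟨e2, e1⟩
    · exact Or.inl ⟨e1, e2⟩
    · exfalso; rw [e1] at e2; linarith
  have hγ₁Γ : ∀ s ∈ Icc 0 T₁, γ₁ s ∈ Γ₁ := fun s hs => hγ₁im ▸ mem_image_of_mem γ₁ hs
  have hγ₂Γ : ∀ u ∈ Icc 0 T₂, γ₂ u ∈ Γ₂ := fun u hu => hγ₂im ▸ mem_image_of_mem γ₂ hu
  have hP₁ : γ₁ 0 ∈ Γ₁ := hγ₁Γ 0 hT₁0
  have hP₂ : γ₁ 0 ∈ Γ₂ := hends0 ▸ hγ₂Γ 0 hT₂0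
  have hQ₁ : γ₁ T₁ ∈ Γ₁ := hγ₁Γ T₁ hT₁T
  have hQ₂ : γ₁ T₁ ∈ Γ₂ := hends1 ▸ hγ₂Γ T₂ hT₂T
  have hPQne : γ₁ 0 ≠ γ₁ T₁ := fun e => (ne_of_lt hT₁) (hγ₁i hT₁0 hT₁T e)
  have hPQcase : ((γ₁ 0) 0 = -L ∧ (γ₁ 0) 1 = -h ∧ (γ₁ T₁) 0 = L ∧ (γ₁ T₁) 1 = h) ∨
      ((γ₁ 0) 0 = L ∧ (γ₁ 0) 1 = h ∧ (γ₁ T₁) 0 = -L ∧ (γ₁ T₁) 1 = -h) := by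
    rcases hcorner _ hP₁ hP₂ with ⟨a0, a1⟩ | ⟨a0, a1⟩ <;>
      rcases hcorner _ hQ₁ hQ₂ with ⟨b0, b1⟩ | ⟨b0, b1⟩
    · exact absurd (hext _ _ (a0.trans b0.symm) (a1.trans b1.symm)) hPQne
    · exact Or.inl ⟨a0, a1, b0, b1⟩
    · exact Or.inr ⟨a0, a1, b0, b1⟩
    · exact absurd (hext _ _ (a0.trans b0.symm) (a1.trans b1.symm)) hPQne
  -- a common corner point is one of the two endpoints
  have hcornerval : ∀ w : E2, w ∈ Γ₁ → w ∈ Γ₂ → w = γ₁ 0 ∨ w = γ₁ T₁ := by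
    intro w hw1 hw2
    rcases hcorner w hw1 hw2 with ⟨c0, c1⟩ | ⟨c0, c1⟩ <;> rcases hPQcase with hPQ | hPQ
    · exact Or.inl (hext _ _ (c0.trans hPQ.1.symm) (c1.trans hPQ.2.1.symm))
    · exact Or.inr (hext _ _ (c0.trans hPQ.2.2.1.symm) (c1.trans hPQ.2.2.2.symm))
    · exact Or.inr (hext _ _ (c0.trans hPQ.2.2.1.symm) (c1.trans hPQ.2.2.2.symm))
    · exact Or.inl (hext _ _ (c0.trans hPQ.1.symm) (c1.trans hPQ.2.1.symm))
  -- continuity of f along the curves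
  have hfγ₂ : ContinuousOn (fun u => f (γ₂ u)) (Icc 0 T₂) :=
    (hf.mono subset_union_right).comp hγ₂c (fun u hu => hγ₂Γ u hu)
  have hfγ₁ : ContinuousOn (fun s => f (γ₁ s)) (Icc 0 T₁) :=
    (hf.mono subset_union_left).comp hγ₁c (fun s hs => hγ₁Γ s hs)
  have hmono₁' : MonotoneOn (f ∘ γ₁) (Icc 0 T₁) := hmono₁.monotoneOn
  have hmono₂' : MonotoneOn (f ∘ γ₂) (Icc 0 T₂) := hmono₂.monotoneOn
  have hbnd₂ : ∀ u ∈ Icc 0 T₂, f (γ₂ u) ∈ Icc (f (γ₁ 0)) (f (γ₁ T₁)) := by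
    intro u hu
    constructor
    · rw [hends0]; exact hmono₂' hT₂0 hu hu.1
    · rw [hends1]; exact hmono₂' hu hT₂T hu.2
  have hbnd₁ : ∀ s ∈ Icc 0 T₁, f (γ₁ s) ∈ Icc (f (γ₁ 0)) (f (γ₁ T₁)) := by
    intro s hs
    exact ⟨hmono₁' hT₁0 hs hs.1, hmono₁' hs hT₁T hs.2⟩
  -- the matching homeomorphism
  set e₂ : Icc (0:ℝ) T₂ → Icc (f (γ₁ 0)) (f (γ₁ T₁)) :=
    fun u => ⟨f (γ₂ u), hbnd₂ u u.2⟩ with he₂def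
  have he₂cont : Continuous e₂ :=
    Continuous.subtype_mk (continuousOn_iff_continuous_restrict.mp hfγ₂) _
  have he₂bij : Function.Bijective e₂ := by
    constructor
    · intro u v huv
      exact Subtype.ext (hmono₂.injOn u.2 v.2 (congrArg Subtype.val huv))
    · rintro ⟨r, hr⟩
      have hsub := intermediate_value_Icc (le_of_lt hT₂) hfγ₂
      have hr' : r ∈ Icc (f (γ₂ 0)) (f (γ₂ T₂)) := by
        rwa [hends0, hends1] at hr
      obtain ⟨u, hu, hequ⟩ := hsub hr'
      exact ⟨⟨u, hu⟩, Subtype.ext hequ⟩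
  set homeo := Continuous.homeoOfEquivCompactToT2 (f := Equiv.ofBijective e₂ he₂bij) he₂cont
    with hhomeo
  -- and the matching function
  set m : ℝ → ℝ := fun s =>
    if hs : s ∈ Icc 0 T₁ then (homeo.symm ⟨f (γ₁ s), hbnd₁ s hs⟩ : ℝ) else 0 with hmdef
  have hm_mem : ∀ s ∈ Icc 0 T₁, m s ∈ Icc 0 T₂ := by
    intro s hs
    simp only [hmdef, dif_pos hs]
    exact (homeo.symm ⟨f (γ₁ s), hbnd₁ s hs⟩).2
  have hm_f : ∀ s ∈ Icc 0 T₁, f (γ₂ (m s)) = f (γ₁ s) := by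
    intro s hs
    simp only [hmdef, dif_pos hs]
    have := homeo.apply_symm_apply ⟨f (γ₁ s), hbnd₁ s hs⟩
    exact congrArg Subtype.val this
  have hm_cont : ContinuousOn m (Icc 0 T₁) := by
    rw [continuousOn_iff_continuous_restrict]
    have heq : (Icc 0 T₁).domRestrict m =
        fun σ : Icc 0 T₁ => (homeo.symm ⟨f (γ₁ σ), hbnd₁ σ σ.2⟩ : ℝ) := by
      funext σ
      simp only [Set.domRestrict_apply, hmdef, dif_pos σ.2]
    rw [heq]
    exact continuous_subtype_val.comp (homeo.symm.continuous.comp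
      (Continuous.subtype_mk (continuousOn_iff_continuous_restrict.mp hfγ₁) _))
  have hm0 : m 0 = 0 := by
    apply hmono₂.injOn (hm_mem 0 hT₁0) hT₂0
    show f (γ₂ (m 0)) = f (γ₂ 0)
    rw [hm_f 0 hT₁0, hends0]
  have hmT : m T₁ = T₂ := by
    apply hmono₂.injOn (hm_mem T₁ hT₁T) hT₂T
    show f (γ₂ (m T₁)) = f (γ₂ T₂)
    rw [hm_f T₁ hT₁T, hends1]
  set Y : ℝ → E2 := fun s => γ₂ (m s) with hYdef
  have hY_cont : ContinuousOn Y (Icc 0 T₁) := hγ₂c.comp hm_cont hm_mem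
  have hY0 : Y 0 = γ₁ 0 := by rw [hYdef]; simp only; rw [hm0, ← hends0]
  have hYT : Y T₁ = γ₁ T₁ := by rw [hYdef]; simp only; rw [hmT, ← hends1]
  have hYΓ : ∀ s ∈ Icc 0 T₁, Y s ∈ Γ₂ := fun s hs => hγ₂Γ (m s) (hm_mem s hs)
  -- coordinate continuity
  have hcoord : ∀ i : Fin 2, Continuous fun p : E2 => p i := fun i => (continuous_apply i).comp (PiLp.continuous_ofLp 2 _)
  intro z hz
  rw [hΩ, mem_setOf_eq] at hz
  obtain ⟨hz0, hz1⟩ := hz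
  -- the test function
  set g : ℝ → ℝ := fun s =>
    (Y s 0 - γ₁ s 0) * (z 1 - γ₁ s 1) - (Y s 1 - γ₁ s 1) * (z 0 - γ₁ s 0) with hgdef
  have hg_cont : ContinuousOn g (Icc 0 T₁) := by
    apply ContinuousOn.sub
    · exact (((hcoord 0).comp_continuousOn hY_cont).sub
        ((hcoord 0).comp_continuousOn hγ₁c)).mul
        (continuousOn_const.sub ((hcoord 1).comp_continuousOn hγ₁c))
    · exact (((hcoord 1).comp_continuousOn hY_cont).sub
        ((hcoord 1).comp_continuousOn hγ₁c)).mul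
        (continuousOn_const.sub ((hcoord 0).comp_continuousOn hγ₁c))
  -- near a corner of type A the test function is positive
  have hA : ∀ e, (e = 0 ∨ e = T₁) → (γ₁ e) 0 = -L → (γ₁ e) 1 = -h →
      ∃ s ∈ Ioo 0 T₁, 0 < g s := by
    intro e he hA0 hA1
    have heIcc : e ∈ Icc 0 T₁ := by rcases he with rfl | rfl; exacts [hT₁0, hT₁T]
    have hYe : Y e = γ₁ e := by rcases he with rfl | rfl; exacts [hY0, hYT]
    have hε₁ : 0 < z 1 + h := by have := (abs_lt.mp hz1).1; linarith
    have hε₂ : 0 < z 0 + L := by have := (abs_lt.mp hz0).1; linarith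
    obtain ⟨s, hs, hF, hG⟩ := near_endpoint 0 T₁ e hT₁ he (fun s => γ₁ s 1) (fun s => Y s 0)
      (((hcoord 1).comp_continuousOn hγ₁c).continuousWithinAt heIcc)
      (((hcoord 0).comp_continuousOn hY_cont).continuousWithinAt heIcc) _ _ hε₁ hε₂
    have hsIcc' : s ∈ Icc 0 T₁ := ⟨le_of_lt hs.1, le_of_lt hs.2⟩
    have hsne : s ≠ e := by rcases he with rfl | rfl; exacts [ne_of_gt hs.1, ne_of_lt hs.2]
    refine ⟨s, hs, ?_⟩
    have hXΓ : (γ₁ s 1 = h ∧ |γ₁ s 0| ≤ L) ∨ (γ₁ s 0 = -L ∧ |γ₁ s 1| ≤ h) := by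
      have := hγ₁Γ s hsIcc'; rw [hΓ₁] at this; exact this
    have hYΓ' : (Y s 1 = -h ∧ |Y s 0| ≤ L) ∨ (Y s 0 = L ∧ |Y s 1| ≤ h) := by
      have := hYΓ s hsIcc'; rw [hΓ₂] at this; exact this
    have hXne : ¬(γ₁ s 0 = -L ∧ γ₁ s 1 = -h) := by
      rintro ⟨e0, e1⟩
      exact hsne (hγ₁i hsIcc' heIcc (hext _ _ (e0.trans hA0.symm) (e1.trans hA1.symm)))
    have hYne : ¬(Y s 0 = -L ∧ Y s 1 = -h) := by
      rintro ⟨e0, e1⟩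
      have hYeq : Y s = γ₁ e := hext _ _ (e0.trans hA0.symm) (e1.trans hA1.symm)
      have hfv : f (γ₁ s) = f (γ₁ e) := by
        rw [← hm_f s hsIcc']; rw [show γ₂ (m s) = Y s from rfl, hYeq]
      exact hsne (hmono₁.injOn hsIcc' heIcc hfv)
    have hXnear : |γ₁ s 1 + h| < z 1 + h := by
      have := hF; simp only [hA1] at this; rwa [sub_neg_eq_add] at this
    have hYnear : |Y s 0 + L| < z 0 + L := by
      have := hG; rw [hYe, hA0] at this; rwa [sub_neg_eq_add] at this
    exact signA L h (z 0) (z 1) (γ₁ s 0) (γ₁ s 1) (Y s 0) (Y s 1) hL hh hz0 hz1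
      hXΓ hYΓ' hXne hYne hXnear hYnear
  have hB : ∀ e, (e = 0 ∨ e = T₁) → (γ₁ e) 0 = L → (γ₁ e) 1 = h →
      ∃ s ∈ Ioo 0 T₁, g s < 0 := by
    intro e he hB0 hB1
    have heIcc : e ∈ Icc 0 T₁ := by rcases he with rfl | rfl; exacts [hT₁0, hT₁T]
    have hYe : Y e = γ₁ e := by rcases he with rfl | rfl; exacts [hY0, hYT]
    have hε₁ : 0 < L - z 0 := by have := (abs_lt.mp hz0).2; linarith
    have hε₂ : 0 < h - z 1 := by have := (abs_lt.mp hz1).2; linarith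
    obtain ⟨s, hs, hF, hG⟩ := near_endpoint 0 T₁ e hT₁ he (fun s => γ₁ s 0) (fun s => Y s 1)
      (((hcoord 0).comp_continuousOn hγ₁c).continuousWithinAt heIcc)
      (((hcoord 1).comp_continuousOn hY_cont).continuousWithinAt heIcc) _ _ hε₁ hε₂
    have hsIcc' : s ∈ Icc 0 T₁ := ⟨le_of_lt hs.1, le_of_lt hs.2⟩
    have hsne : s ≠ e := by rcases he with rfl | rfl; exacts [ne_of_gt hs.1, ne_of_lt hs.2]
    refine ⟨s, hs, ?_⟩
    have hXΓ : (γ₁ s 1 = h ∧ |γ₁ s 0| ≤ L) ∨ (γ₁ s 0 = -L ∧ |γ₁ s 1| ≤ h) := by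
      have := hγ₁Γ s hsIcc'; rw [hΓ₁] at this; exact this
    have hYΓ' : (Y s 1 = -h ∧ |Y s 0| ≤ L) ∨ (Y s 0 = L ∧ |Y s 1| ≤ h) := by
      have := hYΓ s hsIcc'; rw [hΓ₂] at this; exact this
    have hXne : ¬(γ₁ s 0 = L ∧ γ₁ s 1 = h) := by
      rintro ⟨e0, e1⟩
      exact hsne (hγ₁i hsIcc' heIcc (hext _ _ (e0.trans hB0.symm) (e1.trans hB1.symm)))
    have hYne : ¬(Y s 0 = L ∧ Y s 1 = h) := by
      rintro ⟨e0, e1⟩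
      have hYeq : Y s = γ₁ e := hext _ _ (e0.trans hB0.symm) (e1.trans hB1.symm)
      have hfv : f (γ₁ s) = f (γ₁ e) := by
        rw [← hm_f s hsIcc']; rw [show γ₂ (m s) = Y s from rfl, hYeq]
      exact hsne (hmono₁.injOn hsIcc' heIcc hfv)
    have hXnear : |γ₁ s 0 - L| < L - z 0 := by
      have := hF; rwa [hB0] at this
    have hYnear : |Y s 1 - h| < h - z 1 := by
      have := hG; rwa [hYe, hB1] at this
    exact signB L h (z 0) (z 1) (γ₁ s 0) (γ₁ s 1) (Y s 0) (Y s 1) hL hh hz0 hz1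
      hXΓ hYΓ' hXne hYne hXnear hYnear
  -- existence of the zero
  obtain ⟨s, hsIoo, hgs⟩ : ∃ s ∈ Ioo 0 T₁, g s = 0 := by
    rcases hPQcase with ⟨hP0, hP1, hQ0, hQ1⟩ | ⟨hP0, hP1, hQ0, hQ1⟩
    · obtain ⟨s₀, hs₀, hg₀⟩ := hA 0 (Or.inl rfl) hP0 hP1
      obtain ⟨s₁, hs₁, hg₁⟩ := hB T₁ (Or.inr rfl) hQ0 hQ1
      exact ivt_zero T₁ g hg_cont s₀ s₁ hs₀ hs₁ hg₀ hg₁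
    · obtain ⟨s₀, hs₀, hg₀⟩ := hB 0 (Or.inl rfl) hP0 hP1
      obtain ⟨s₁, hs₁, hg₁⟩ := hA T₁ (Or.inr rfl) hQ0 hQ1
      exact ivt_zero T₁ g hg_cont s₁ s₀ hs₁ hs₀ hg₁ hg₀
  have hsIcc : s ∈ Icc 0 T₁ := ⟨le_of_lt hsIoo.1, le_of_lt hsIoo.2⟩
  -- the chord through z
  set p := γ₁ s with hpdef
  set q := Y s with hqdef
  have hp : p ∈ Γ₁ := hγ₁Γ s hsIcc
  have hq : q ∈ Γ₂ := hYΓ s hsIcc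
  have hfq : f q = f p := hm_f s hsIcc
  have htIoo : f p ∈ Ioo (f (γ₁ 0)) (f (γ₁ T₁)) :=
    ⟨hmono₁ hT₁0 hsIcc hsIoo.1, hmono₁ hsIcc hT₁T hsIoo.2⟩
  have hpqne : p ≠ q := by
    intro hcon
    rcases hcornerval p hp (hcon ▸ hq) with hc | hc
    · exact absurd (hc ▸ htIoo.1) (lt_irrefl _)
    · exact absurd (hc ▸ htIoo.2) (lt_irrefl _)
  have hd : ¬(q 0 - p 0 = 0 ∧ q 1 - p 1 = 0) := by
    rintro ⟨e0, e1⟩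
    exact hpqne (hext p q (by linarith) (by linarith))
  obtain ⟨lam, hlam0, hlam1, hzl0, hzl1⟩ :=
    seg_param L h (z 0) (z 1) (p 0) (p 1) (q 0) (q 1) hz0 hz1
      (hΓ₁K p hp).1.1 (hΓ₁K p hp).1.2 (hΓ₂K q hq).1.1 (hΓ₂K q hq).1.2
      (hΓ₁K p hp).2 (hΓ₂K q hq).2 hd hgs
  have hseg : z ∈ segment ℝ p q := by
    refine ⟨1 - lam, lam, by linarith, le_of_lt hlam0, by ring, ?_⟩
    apply hext
    · simp only [PiLp.add_apply, PiLp.smul_apply, smul_eq_mul]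
      linarith
    · simp only [PiLp.add_apply, PiLp.smul_apply, smul_eq_mul]
      linarith
  -- uniqueness engine
  have huniq : ∀ ta tb : ℝ, ta ∈ Ioo (f (γ₁ 0)) (f (γ₁ T₁)) →
      tb ∈ Ioo (f (γ₁ 0)) (f (γ₁ T₁)) → ta < tb →
      (∃ p ∈ Γ₁, ∃ q ∈ Γ₂, f p = ta ∧ f q = ta ∧ z ∈ segment ℝ p q) →
      (∃ p ∈ Γ₁, ∃ q ∈ Γ₂, f p = tb ∧ f q = tb ∧ z ∈ segment ℝ p q) → False := by
    rintro ta tb hta htb htab ⟨pa, hpa, qa, hqa, hfpa, hfqa, hsega⟩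
      ⟨pb, hpb, qb, hqb, hfpb, hfqb, hsegb⟩
    have hnc : ∀ (t : ℝ), t ∈ Ioo (f (γ₁ 0)) (f (γ₁ T₁)) →
        ∀ w : E2, w ∈ Γ₁ → w ∈ Γ₂ → f w ≠ t := by
      intro t ht w h1 h2 hfw
      rcases hcornerval w h1 h2 with hc | hc <;> rw [hc] at hfw
      · exact absurd (hfw ▸ ht.1) (lt_irrefl _)
      · exact absurd (hfw ▸ ht.2) (lt_irrefl _)
    rw [← hγ₁im] at hpa hpb
    rw [← hγ₂im] at hqa hqb
    obtain ⟨sa, hsa, rfl⟩ := hpa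
    obtain ⟨sb, hsb, rfl⟩ := hpb
    obtain ⟨ua, hua, rfl⟩ := hqa
    obtain ⟨ub, hub, rfl⟩ := hqb
    have hpaΓ : γ₁ sa ∈ Γ₁ := hγ₁Γ sa hsa
    have hpbΓ : γ₁ sb ∈ Γ₁ := hγ₁Γ sb hsb
    have hqaΓ : γ₂ ua ∈ Γ₂ := hγ₂Γ ua hua
    have hqbΓ : γ₂ ub ∈ Γ₂ := hγ₂Γ ub hub
    have hsab : sa < sb := by
      by_contra hcon
      push_neg at hcon
      have := hmono₁' hsb hsa hcon
      simp only [Function.comp_apply] at this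
      rw [hfpa, hfpb] at this
      linarith
    have huab : ua < ub := by
      by_contra hcon
      push_neg at hcon
      have := hmono₂' hub hua hcon
      simp only [Function.comp_apply] at this
      rw [hfqa, hfqb] at this
      linarith
    -- c is the line functional of the chord (pa, qa)
    set c : E2 → ℝ := fun w =>
      (γ₂ ua 0 - γ₁ sa 0) * (w 1 - γ₁ sa 1) - (γ₂ ua 1 - γ₁ sa 1) * (w 0 - γ₁ sa 0) with hcdef
    have hc_cont : Continuous c := by
      apply Continuous.sub
      · exact continuous_const.mul ((hcoord 1).sub continuous_const)
      · exact continuous_const.mul ((hcoord 0).sub continuous_const)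
    have hdne : γ₁ sa ≠ γ₂ ua := fun ee => hnc ta hta (γ₁ sa) hpaΓ (by rw [ee]; exact hqaΓ) hfpa
    have hd : ¬(γ₂ ua 0 - γ₁ sa 0 = 0 ∧ γ₂ ua 1 - γ₁ sa 1 = 0) := by
      rintro ⟨e0, e1⟩
      exact hdne (hext _ _ (by linarith) (by linarith))
    -- coordinates of z on the chord (pa, qa)
    obtain ⟨aa, ba, haa, hba, habs, hzeq⟩ := hsega
    have hco : ∀ i : Fin 2, z i = aa * γ₁ sa i + ba * γ₂ ua i := by
      intro i
      rw [← hzeq]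
      simp [PiLp.add_apply, PiLp.smul_apply]
    have hba0 : 0 < ba := by
      rcases lt_or_eq_of_le hba with hlt | heq
      · exact hlt
      · exfalso
        have haa1 : aa = 1 := by linarith
        have e0 : z 0 = γ₁ sa 0 := by rw [hco 0, ← heq, haa1]; ring
        have e1 : z 1 = γ₁ sa 1 := by rw [hco 1, ← heq, haa1]; ring
        exact (hΓ₁K _ hpaΓ).2 ⟨by rw [← e0]; exact hz0, by rw [← e1]; exact hz1⟩
    have hba1 : ba < 1 := by
      rcases lt_or_eq_of_le (show ba ≤ 1 by linarith) with hlt | heq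
      · exact hlt
      · exfalso
        have haa0 : aa = 0 := by linarith
        have e0 : z 0 = γ₂ ua 0 := by rw [hco 0, heq, haa0]; ring
        have e1 : z 1 = γ₂ ua 1 := by rw [hco 1, heq, haa0]; ring
        exact (hΓ₂K _ hqaΓ).2 ⟨by rw [← e0]; exact hz0, by rw [← e1]; exact hz1⟩
    have hzl0a : z 0 = γ₁ sa 0 + ba * (γ₂ ua 0 - γ₁ sa 0) := by
      linear_combination (hco 0) + (γ₁ sa 0) * habs
    have hzl1a : z 1 = γ₁ sa 1 + ba * (γ₂ ua 1 - γ₁ sa 1) := by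
      linear_combination (hco 1) + (γ₁ sa 1) * habs
    have hcz : c z = 0 := by
      simp only [hcdef]
      linear_combination (γ₂ ua 0 - γ₁ sa 0) * hzl1a - (γ₂ ua 1 - γ₁ sa 1) * hzl0a
    -- boundary points on the line through (pa, qa) are its endpoints
    have hlinept : ∀ w : E2, w ∈ Γ₁ ∪ Γ₂ → c w = 0 → w = γ₁ sa ∨ w = γ₂ ua := by
      intro w hw hcw
      have hwK : (|w 0| ≤ L ∧ |w 1| ≤ h) ∧ ¬(|w 0| < L ∧ |w 1| < h) := by
        rcases hw with hw | hw
        · exact hΓ₁K w hw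
        · exact hΓ₂K w hw
      rcases line_pt L h (z 0) (z 1) (γ₁ sa 0) (γ₁ sa 1) (γ₂ ua 0) (γ₂ ua 1) (w 0) (w 1)
        hz0 hz1 (hΓ₁K _ hpaΓ).1.1 (hΓ₁K _ hpaΓ).1.2 (hΓ₂K _ hqaΓ).1.1 (hΓ₂K _ hqaΓ).1.2
        hwK.1.1 hwK.1.2 (hΓ₁K _ hpaΓ).2 (hΓ₂K _ hqaΓ).2 hwK.2
        ba hba0 hba1 hzl0a hzl1a hd hcw with ⟨e0, e1⟩ | ⟨e0, e1⟩
      · exact Or.inl (hext _ _ e0 e1)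
      · exact Or.inr (hext _ _ e0 e1)
    -- c does not vanish at pb nor at qb
    have hcpb : c (γ₁ sb) ≠ 0 := by
      intro hcon
      rcases hlinept _ (Or.inl hpbΓ) hcon with ee | ee
      · rw [ee, hfpa] at hfpb; linarith
      · exact hnc tb htb (γ₁ sb) hpbΓ (by rw [ee]; exact hqaΓ) hfpb
    have hcqb : c (γ₂ ub) ≠ 0 := by
      intro hcon
      rcases hlinept _ (Or.inr hqbΓ) hcon with ee | ee
      · exact hnc tb htb (γ₂ ub) (by rw [ee]; exact hpaΓ) hqbΓ hfqb
      · rw [ee, hfqa] at hfqb; linarith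
    -- coordinates of z on the chord (pb, qb)
    obtain ⟨ab, bb, hab', hbb', habs', hzeqb⟩ := hsegb
    have hcob : ∀ i : Fin 2, z i = ab * γ₁ sb i + bb * γ₂ ub i := by
      intro i
      rw [← hzeqb]
      simp [PiLp.add_apply, PiLp.smul_apply]
    have hbb0 : 0 < bb := by
      rcases lt_or_eq_of_le hbb' with hlt | heq
      · exact hlt
      · exfalso
        have hab1 : ab = 1 := by linarith
        have e0 : z 0 = γ₁ sb 0 := by rw [hcob 0, ← heq, hab1]; ring
        have e1 : z 1 = γ₁ sb 1 := by rw [hcob 1, ← heq, hab1]; ring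
        exact (hΓ₁K _ hpbΓ).2 ⟨by rw [← e0]; exact hz0, by rw [← e1]; exact hz1⟩
    have hbb1 : bb < 1 := by
      rcases lt_or_eq_of_le (show bb ≤ 1 by linarith) with hlt | heq
      · exact hlt
      · exfalso
        have hab0 : ab = 0 := by linarith
        have e0 : z 0 = γ₂ ub 0 := by rw [hcob 0, heq, hab0]; ring
        have e1 : z 1 = γ₂ ub 1 := by rw [hcob 1, heq, hab0]; ring
        exact (hΓ₂K _ hqbΓ).2 ⟨by rw [← e0]; exact hz0, by rw [← e1]; exact hz1⟩
    have hz0comb : (1 - bb) * γ₁ sb 0 + bb * γ₂ ub 0 = z 0 := by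
      linear_combination -(hcob 0) - (γ₁ sb 0) * habs'
    have hz1comb : (1 - bb) * γ₁ sb 1 + bb * γ₂ ub 1 = z 1 := by
      linear_combination -(hcob 1) - (γ₁ sb 1) * habs'
    have hsigns : (1 - bb) * c (γ₁ sb) + bb * c (γ₂ ub) = 0 := by
      simp only [hcdef]
      linear_combination hcz + (γ₂ ua 0 - γ₁ sa 0) * hz1comb - (γ₂ ua 1 - γ₁ sa 1) * hz0comb
    have hprod : c (γ₁ sb) * c (γ₂ ub) < 0 := by
      have hkey : (1 - bb) * (c (γ₁ sb) * c (γ₂ ub)) + bb * (c (γ₂ ub) * c (γ₂ ub)) = 0 := by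
        linear_combination c (γ₂ ub) * hsigns
      nlinarith [mul_self_pos.mpr hcqb, hkey, hbb0, hbb1]
    -- the arc from pb to qb through γ₁ T₁ avoids the line, contradiction
    have hsub1 : Ioc sa T₁ ⊆ Icc 0 T₁ := fun x hx => ⟨le_trans hsa.1 (le_of_lt hx.1), hx.2⟩
    have hsub2 : Ioc ua T₂ ⊆ Icc 0 T₂ := fun x hx => ⟨le_trans hua.1 (le_of_lt hx.1), hx.2⟩
    have harc1 : IsPreconnected (γ₁ '' Ioc sa T₁) := isPreconnected_Ioc.image γ₁ (hγ₁c.mono hsub1)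
    have harc2 : IsPreconnected (γ₂ '' Ioc ua T₂) := isPreconnected_Ioc.image γ₂ (hγ₂c.mono hsub2)
    have hx1 : γ₁ T₁ ∈ γ₁ '' Ioc sa T₁ := ⟨T₁, ⟨lt_of_lt_of_le hsab hsb.2, le_refl _⟩, rfl⟩
    have hx2 : γ₁ T₁ ∈ γ₂ '' Ioc ua T₂ := ⟨T₂, ⟨lt_of_lt_of_le huab hub.2, le_refl _⟩, hends1.symm⟩
    have harc : IsPreconnected (γ₁ '' Ioc sa T₁ ∪ γ₂ '' Ioc ua T₂) :=
      IsPreconnected.union _ hx1 hx2 harc1 harc2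
    have himg : IsPreconnected (c '' (γ₁ '' Ioc sa T₁ ∪ γ₂ '' Ioc ua T₂)) :=
      harc.image c hc_cont.continuousOn
    have hmem1 : c (γ₁ sb) ∈ c '' (γ₁ '' Ioc sa T₁ ∪ γ₂ '' Ioc ua T₂) :=
      mem_image_of_mem c (Or.inl ⟨sb, ⟨hsab, hsb.2⟩, rfl⟩)
    have hmem2 : c (γ₂ ub) ∈ c '' (γ₁ '' Ioc sa T₁ ∪ γ₂ '' Ioc ua T₂) :=
      mem_image_of_mem c (Or.inr ⟨ub, ⟨huab, hub.2⟩, rfl⟩)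
    have h0mem : (0:ℝ) ∈ c '' (γ₁ '' Ioc sa T₁ ∪ γ₂ '' Ioc ua T₂) := by
      rcases le_total (c (γ₁ sb)) (c (γ₂ ub)) with hle | hle
      · exact himg.Icc_subset hmem1 hmem2 ⟨by nlinarith, by nlinarith⟩
      · exact himg.Icc_subset hmem2 hmem1 ⟨by nlinarith, by nlinarith⟩
    obtain ⟨w, hwarc, hcw⟩ := h0mem
    rcases hwarc with ⟨r, hr, rfl⟩ | ⟨r, hr, rfl⟩
    · rcases hlinept (γ₁ r) (Or.inl (hγ₁Γ r (hsub1 hr))) hcw with ee | ee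
      · exact absurd (hγ₁i (hsub1 hr) hsa ee) (ne_of_gt hr.1)
      · exact hnc ta hta (γ₁ r) (hγ₁Γ r (hsub1 hr)) (by rw [ee]; exact hqaΓ)
          (by rw [ee]; exact hfqa)
    · rcases hlinept (γ₂ r) (Or.inr (hγ₂Γ r (hsub2 hr))) hcw with ee | ee
      · exact hnc ta hta (γ₂ r) (by rw [ee]; exact hpaΓ) (hγ₂Γ r (hsub2 hr))
          (by rw [ee]; exact hfpa)
      · exact absurd (hγ₂i (hsub2 hr) hua ee) (ne_of_gt hr.1)
  refine ⟨f p, ⟨htIoo, p, hp, q, hq, rfl, hfq, hseg⟩, ?_⟩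
  rintro t' ⟨ht'Ioo, hwit'⟩
  rcases lt_trichotomy t' (f p) with hlt | heq | hgt
  · exact absurd (huniq t' (f p) ht'Ioo htIoo hlt hwit'
      ⟨p, hp, q, hq, rfl, hfq, hseg⟩) not_false
  · exact heq
  · exact absurd (huniq (f p) t' htIoo ht'Ioo hgt
      ⟨p, hp, q, hq, rfl, hfq, hseg⟩ hwit') not_false

end
end

section
/- Let Ω ⊆ ℝ² be strictly convex with Γ, Υ as above, let [0,L) ∋ s ↦ x(s) be an arclength parametrization of Γ with endpoints x(0) = a, x(L) = b of Υ. Define B_a = {s ∈ (0,L) : dist(x(s), Υ) = |x(s) − a|} and B_b analogously for b. Then sup B_a is attained (sup B_a ∈ B_a) and inf B_b is attained, and if the set S = {x ∈ Γ : dist(x, Υ) is realized at some point of the relative interior of Υ} is nonempty, then sup B_a = inf x⁻¹(S) and inf B_b = sup x⁻¹(S). -/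
open MeasureTheory Set Filter Metric Bornology
open scoped ENNReal Topology

noncomputable section

lemma cont_coord (i : Fin 2) : Continuous fun x : E2 => x i :=
  (continuous_apply i).comp (PiLp.continuous_ofLp 2 _)

lemma e2_eq_of_coords {v w : E2} (h0 : v 0 = w 0) (h1 : v 1 = w 1) : v = w := by
  have : ∀ i : Fin 2, v i = w i := by
    intro i; fin_cases i <;> assumption
  exact WithLp.ofLp_injective 2 (funext this)

lemma sameRay_eq_of_norm_eq {a b : E2} (h : SameRay ℝ a b) (hn : ‖a‖ = ‖b‖) : a = b := by
  have := h.norm_sub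
  rw [hn, sub_self, abs_zero] at this
  exact sub_eq_zero.mp (norm_eq_zero.mp this)


lemma contOn_glue {α β : Type*} [TopologicalSpace α] [TopologicalSpace β] {f : α → β}
    {s t : Set α} (hs : IsClosed s) (ht : IsClosed t)
    (hfs : ContinuousOn f s) (hft : ContinuousOn f t) : ContinuousOn f (s ∪ t) := by
  intro x hx
  have h1 : ContinuousWithinAt f s x := by
    by_cases hxs : x ∈ s
    · exact hfs x hxs
    · exact continuousWithinAt_of_notMem_closure (by rwa [hs.closure_eq])
  have h2 : ContinuousWithinAt f t x := by
    by_cases hxt : x ∈ t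
    · exact hft x hxt
    · exact continuousWithinAt_of_notMem_closure (by rwa [ht.closure_eq])
  exact h1.union h2


lemma refl_sSup (c : ℝ) {B : Set ℝ} (hne : B.Nonempty) (hbd : BddBelow B) :
    sSup ((fun s => c - s) '' B) = c - sInf B := by
  apply IsLUB.csSup_eq _ (hne.image _)
  constructor
  · rintro y ⟨s, hs, rfl⟩
    have := csInf_le hbd hs; dsimp only; linarith
  · intro w hw
    have : ∀ s ∈ B, c - w ≤ s := fun s hs => by
      have := hw (mem_image_of_mem _ hs); linarith
    have := le_csInf hne this; linarith


lemma refl_sInf (c : ℝ) {B : Set ℝ} (hne : B.Nonempty) (hbd : BddAbove B) :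
    sInf ((fun s => c - s) '' B) = c - sSup B := by
  apply IsGLB.csInf_eq _ (hne.image _)
  constructor
  · rintro y ⟨s, hs, rfl⟩
    have := le_csSup hbd hs; dsimp only; linarith
  · intro w hw
    have : ∀ s ∈ B, s ≤ c - w := fun s hs => by
      have := hw (mem_image_of_mem _ hs); linarith
    have := csSup_le hne this; linarith


lemma no_circle_inj {η : ℝ → ℝ} {P : ℝ} (hP : 0 < P) (hc : ContinuousOn η (Icc 0 P))
    (hi : InjOn η (Ico 0 P)) (hep : η P = η 0) : False := by
  have h2 : P / 2 ∈ Ico 0 P := ⟨by linarith, by linarith⟩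
  have h0 : (0:ℝ) ∈ Ico 0 P := ⟨le_refl _, hP⟩
  have hne : η (P/2) ≠ η 0 := fun h => by
    have := hi h2 h0 h; linarith
  have hc1 : ContinuousOn η (Icc 0 (P/2)) := hc.mono (Icc_subset_Icc le_rfl (by linarith))
  have hc2 : ContinuousOn η (Icc (P/2) P) := hc.mono (Icc_subset_Icc (by linarith) le_rfl)
  rcases lt_or_gt_of_ne hne with hlt | hgt
  · -- η (P/2) < η 0 = η P : pick v in between
    obtain ⟨v, hv1, hv2⟩ := exists_between hlt
    have e1 : v ∈ Ioo (η (P/2)) (η 0) := ⟨hv1, hv2⟩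
    obtain ⟨θ1, hθ1, hvθ1⟩ := intermediate_value_Ioo' (by linarith : (0:ℝ) ≤ P/2) hc1 e1
    have e2 : v ∈ Ioo (η (P/2)) (η P) := by rw [hep]; exact ⟨hv1, hv2⟩
    obtain ⟨θ2, hθ2, hvθ2⟩ := intermediate_value_Ioo (by linarith : P/2 ≤ P) hc2 e2
    have : θ1 = θ2 := hi ⟨hθ1.1.le, by linarith [hθ1.2]⟩ ⟨by linarith [hθ2.1], hθ2.2⟩
      (by rw [hvθ1, hvθ2])
    linarith [hθ1.2, hθ2.1]
  · obtain ⟨v, hv1, hv2⟩ := exists_between hgt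
    have e1 : v ∈ Ioo (η 0) (η (P/2)) := ⟨hv1, hv2⟩
    obtain ⟨θ1, hθ1, hvθ1⟩ := intermediate_value_Ioo (by linarith : (0:ℝ) ≤ P/2) hc1 e1
    have e2 : v ∈ Ioo (η P) (η (P/2)) := by rw [hep]; exact ⟨hv1, hv2⟩
    obtain ⟨θ2, hθ2, hvθ2⟩ := intermediate_value_Ioo' (by linarith : P/2 ≤ P) hc2 e2
    have : θ1 = θ2 := hi ⟨hθ1.1.le, by linarith [hθ1.2]⟩ ⟨by linarith [hθ2.1], hθ2.2⟩
      (by rw [hvθ1, hvθ2])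
    linarith [hθ1.2, hθ2.1]


lemma sign_const {F : ℝ → ℝ} {lo hi : ℝ} (hF : ContinuousOn F (Icc lo hi))
    (hz : ∀ r ∈ Ioo lo hi, F r ≠ 0) {r1 r2 : ℝ} (h1 : r1 ∈ Ioo lo hi) (h2 : r2 ∈ Ioo lo hi)
    (hpos : 0 < F r1) : 0 < F r2 := by
  rcases lt_trichotomy (F r2) 0 with hneg | h0 | hp
  · exfalso
    rcases lt_trichotomy r1 r2 with hlt | rfl | hgt
    · have hsub : Icc r1 r2 ⊆ Icc lo hi := Icc_subset_Icc h1.1.le h2.2.le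
      obtain ⟨ζ, hζ, hζ0⟩ := intermediate_value_Ioo' hlt.le (hF.mono hsub)
        (⟨hneg, hpos⟩ : (0:ℝ) ∈ Ioo (F r2) (F r1))
      exact hz ζ ⟨lt_trans h1.1 hζ.1, lt_trans hζ.2 h2.2⟩ hζ0
    · linarith
    · have hsub : Icc r2 r1 ⊆ Icc lo hi := Icc_subset_Icc h2.1.le h1.2.le
      obtain ⟨ζ, hζ, hζ0⟩ := intermediate_value_Ioo hgt.le (hF.mono hsub)
        (⟨hneg, hpos⟩ : (0:ℝ) ∈ Ioo (F r2) (F r1))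
      exact hz ζ ⟨lt_trans h2.1 hζ.1, lt_trans hζ.2 h1.2⟩ hζ0
  · exact absurd h0 (hz r2 h2)
  · exact hp


/-- If an affine functional is nonnegative on the frontier of a compact strictly convex set
and vanishes at two distinct points of it, contradiction. -/
lemma support_contra (K : Set E2) (hKcl : IsClosed K) (hKcp : IsCompact K)
    (hsc : StrictConvex ℝ K) (c1 c2 c0 : ℝ) (hc : c1 ≠ 0 ∨ c2 ≠ 0)
    (hfr : ∀ x ∈ frontier K, 0 ≤ c1 * x 0 + c2 * x 1 + c0)
    (p y : E2) (hp : p ∈ K) (hy : y ∈ K) (hpy : p ≠ y)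
    (hhp : c1 * p 0 + c2 * p 1 + c0 = 0) (hhy : c1 * y 0 + c2 * y 1 + c0 = 0) : False := by
  set h : E2 → ℝ := fun x => c1 * x 0 + c2 * x 1 + c0 with hh
  have hcont : Continuous h := by
    apply Continuous.add (Continuous.add _ _) continuous_const
    · exact continuous_const.mul (cont_coord 0)
    · exact continuous_const.mul (cont_coord 1)
  set e : E2 := (WithLp.equiv 2 (Fin 2 → ℝ)).symm ![c1, c2] with he
  have he0 : e 0 = c1 := by simp [he, PiLp.toLp_apply]
  have he1 : e 1 = c2 := by simp [he, PiLp.toLp_apply]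
  have hee : 0 < c1 * c1 + c2 * c2 := by
    rcases hc with h | h
    · nlinarith [mul_self_pos.mpr h, mul_self_nonneg c2]
    · nlinarith [mul_self_pos.mpr h, mul_self_nonneg c1]
  -- from any interior point one can decrease h within K
  have step_dec : ∀ m : E2, m ∈ interior K → ∃ x ∈ K, h x < h m := by
    intro m hm
    rcases Metric.isOpen_iff.mp isOpen_interior m hm with ⟨ε, hε, hball⟩
    set δ : ℝ := ε / (2 * (‖e‖ + 1)) with hδdef
    have hnorm : (0:ℝ) < ‖e‖ + 1 := by positivity
    have hδ : 0 < δ := by positivity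
    refine ⟨m - δ • e, ?_, ?_⟩
    · apply interior_subset (hball ?_)
      rw [mem_ball, dist_eq_norm]
      have : m - δ • e - m = -(δ • e) := by abel
      rw [this, norm_neg, norm_smul, Real.norm_eq_abs, abs_of_pos hδ]
      calc δ * ‖e‖ < δ * (‖e‖ + 1) := by nlinarith [norm_nonneg e]
        _ = ε / 2 := by rw [hδdef]; field_simp
        _ < ε := by linarith
    · have c0' : (m - δ • e) 0 = m 0 - δ * c1 := by
        rw [PiLp.sub_apply, PiLp.smul_apply, he0, smul_eq_mul]
      have c1' : (m - δ • e) 1 = m 1 - δ * c2 := by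
        rw [PiLp.sub_apply, PiLp.smul_apply, he1, smul_eq_mul]
      simp only [hh, c0', c1']
      nlinarith
  -- h is nonnegative on all of K
  have hKnn : ∀ x ∈ K, 0 ≤ h x := by
    intro x hx
    by_contra hneg
    push_neg at hneg
    obtain ⟨m, hmK, hmin⟩ := hKcp.exists_isMinOn ⟨p, hp⟩ hcont.continuousOn
    have hm_neg : h m < 0 := lt_of_le_of_lt (hmin hx) hneg
    have hm_int : m ∈ interior K := by
      by_contra hmi
      have : m ∈ frontier K := by rw [hKcl.frontier_eq]; exact ⟨hmK, hmi⟩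
      exact absurd (hfr m this) (not_le.mpr hm_neg)
    obtain ⟨x', hx'K, hlt⟩ := step_dec m hm_int
    exact absurd (hmin hx'K) (not_le.mpr hlt)
  -- midpoint of p y is interior with h = 0, contradiction
  set μ : E2 := (1/2 : ℝ) • p + (1/2 : ℝ) • y with hμdef
  have hμint : μ ∈ interior K := by
    apply hsc.openSegment_subset hp hy hpy
    exact ⟨1/2, 1/2, by norm_num, by norm_num, by norm_num, rfl⟩
  have hμ0 : h μ = 0 := by
    have m0 : μ 0 = (1/2) * p 0 + (1/2) * y 0 := by
      rw [hμdef, PiLp.add_apply, PiLp.smul_apply, PiLp.smul_apply, smul_eq_mul, smul_eq_mul]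
    have m1 : μ 1 = (1/2) * p 1 + (1/2) * y 1 := by
      rw [hμdef, PiLp.add_apply, PiLp.smul_apply, PiLp.smul_apply, smul_eq_mul, smul_eq_mul]
    simp only [hh, m0, m1]; linarith
  obtain ⟨x', hx'K, hlt⟩ := step_dec μ hμint
  rw [hμ0] at hlt
  exact absurd (hKnn x' hx'K) (not_le.mpr hlt)


lemma ray_endgame {q z y y' : E2} (hzq : z ≠ q) (h1 : z ∈ segment ℝ q y)
    (h2 : z ∈ segment ℝ q y') (hd : dist q y = dist q y') : y = y' := by
  have s1 : SameRay ℝ (z - q) (y - z) := mem_segment_iff_sameRay.mp h1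
  have s2 : SameRay ℝ (z - q) (y' - z) := mem_segment_iff_sameRay.mp h2
  have s1' : SameRay ℝ (z - q) (y - q) := by
    rw [show y - q = (z - q) + (y - z) by abel]
    exact (SameRay.refl _).add_right s1
  have s2' : SameRay ℝ (z - q) (y' - q) := by
    rw [show y' - q = (z - q) + (y' - z) by abel]
    exact (SameRay.refl _).add_right s2
  have s3 : SameRay ℝ (y - q) (y' - q) :=
    s1'.symm.trans s2' (fun h => absurd h (sub_ne_zero.mpr hzq))
  have hnorm : ‖y - q‖ = ‖y' - q‖ := by
    rw [← dist_eq_norm, ← dist_eq_norm, dist_comm y q, dist_comm y' q]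
    exact hd
  exact sub_left_inj.mp (sameRay_eq_of_norm_eq s3 hnorm)


set_option maxHeartbeats 1000000 in
lemma cross_key (K : Set E2) (hKcl : IsClosed K) (hKcp : IsCompact K) (hsc : StrictConvex ℝ K)
    (P : ℝ) (f : ℝ → E2) (hfc : ContinuousOn f (Icc 0 P)) (hfi : InjOn f (Ico 0 P))
    (hfim : f '' Icc 0 P = frontier K) (hfP : f P = f 0)
    (r2 r3 r4 : ℝ) (h1 : 0 < r2) (h2 : r2 < r3) (h3 : r3 < r4) (h4 : r4 < P)
    (hd1 : dist (f 0) (f r3) ≤ dist (f 0) (f r4))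
    (hd2 : dist (f r2) (f r4) ≤ dist (f r2) (f r3)) : False := by
  have hP : 0 < P := by linarith
  set p : E2 := f 0 with hpdef
  set p' : E2 := f r2 with hp'def
  set y : E2 := f r3 with hydef
  set y' : E2 := f r4 with hy'def
  have m0 : (0:ℝ) ∈ Ico 0 P := ⟨le_rfl, hP⟩
  have m2 : r2 ∈ Ico 0 P := ⟨h1.le, by linarith⟩
  have m3 : r3 ∈ Ico 0 P := ⟨by linarith, by linarith⟩
  have m4 : r4 ∈ Ico 0 P := ⟨by linarith, h4⟩
  have memfr : ∀ r ∈ Icc 0 P, f r ∈ frontier K := fun r hr => hfim ▸ mem_image_of_mem f hr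
  have hfrK : frontier K ⊆ K := hKcl.frontier_subset
  have hpfr : p ∈ frontier K := memfr 0 ⟨le_rfl, hP.le⟩
  have hp'fr : p' ∈ frontier K := memfr r2 ⟨h1.le, by linarith⟩
  have hyfr : y ∈ frontier K := memfr r3 ⟨by linarith, by linarith⟩
  have hy'fr : y' ∈ frontier K := memfr r4 ⟨by linarith, h4.le⟩
  have hpK := hfrK hpfr; have hp'K := hfrK hp'fr
  have hyK := hfrK hyfr; have hy'K := hfrK hy'fr
  have hne : ∀ {s t : ℝ}, s ∈ Ico 0 P → t ∈ Ico 0 P → s ≠ t → f s ≠ f t := by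
    intro s t hs ht hst heq; exact hst (hfi hs ht heq)
  have hpy : p ≠ y := hne m0 m3 (by linarith)
  have hpp' : p ≠ p' := hne m0 m2 (by linarith)
  have hyy' : y ≠ y' := hne m3 m4 (by linarith)
  set h : E2 → ℝ :=
    fun x => (y 1 - p 1) * x 0 + (p 0 - y 0) * x 1 + ((y 0 - p 0) * p 1 - (y 1 - p 1) * p 0)
    with hh
  have hcont : Continuous h := by
    apply Continuous.add (Continuous.add _ _) continuous_const
    · exact continuous_const.mul (cont_coord 0)
    · exact continuous_const.mul (cont_coord 1)
  have hcne : (y 1 - p 1) ≠ 0 ∨ (p 0 - y 0) ≠ 0 := by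
    by_contra hcc
    push_neg at hcc
    exact hpy (e2_eq_of_coords (by linarith [hcc.2]) (by linarith [hcc.1])).symm |>.elim
  have hhp : h p = 0 := by simp only [hh]; ring
  have hhy : h y = 0 := by simp only [hh]; ring
  -- K ∩ {h = 0} = segment p y
  have key1 : ∀ x ∈ K, h x = 0 → x ∈ segment ℝ p y := by
    intro x hx hx0
    have hrel : (y 1 - p 1) * (x 0 - p 0) = (y 0 - p 0) * (x 1 - p 1) := by
      simp only [hh] at hx0; ring_nf at hx0 ⊢; linarith
    set t : ℝ := if (y 0 - p 0) = 0 then (x 1 - p 1) / (y 1 - p 1) else (x 0 - p 0) / (y 0 - p 0)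
      with ht
    have hcoord : ∀ i : Fin 2, (p + t • (y - p)) i = p i + t * (y i - p i) := by
      intro i; rw [PiLp.add_apply, PiLp.smul_apply, PiLp.sub_apply, smul_eq_mul]
    have hxpt : x = p + t • (y - p) := by
      by_cases hz : (y 0 - p 0) = 0
      · have h1' : (y 1 - p 1) ≠ 0 := by
          rcases hcne with h' | h'
          · exact h'
          · exact absurd (by linarith) h'
        rw [ht, if_pos hz] at *
        apply e2_eq_of_coords
        · rw [hcoord 0]
          have : (y 1 - p 1) * (x 0 - p 0) = 0 := by rw [hrel, hz, zero_mul]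
          rcases mul_eq_zero.mp this with h' | h'
          · exact absurd h' h1'
          · rw [hz, mul_zero]; linarith
        · rw [hcoord 1, div_mul_cancel₀ _ h1']; ring
      · rw [ht, if_neg hz] at *
        apply e2_eq_of_coords
        · rw [hcoord 0, div_mul_cancel₀ _ hz]; ring
        · rw [hcoord 1]
          field_simp
          nlinarith [hrel]
    have hco : ∀ i : Fin 2, x i = p i + t * (y i - p i) := by
      intro i; rw [hxpt, hcoord i]
    rcases lt_or_ge t 0 with htneg | htnn
    · exfalso
      have h1t : (1:ℝ) - t ≠ 0 := ne_of_gt (by linarith)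
      have hxy : x ≠ y := by
        intro hE
        apply hpy
        apply e2_eq_of_coords <;>
        · have h2 := hco 0
          have h3 := hco 1
          rw [hE] at h2 h3
          have e0 : (y 0 - p 0) * (1 - t) = 0 := by ring_nf; ring_nf at h2; linarith
          have e1 : (y 1 - p 1) * (1 - t) = 0 := by ring_nf; ring_nf at h3; linarith
          rcases mul_eq_zero.mp e0 with h' | h'
          rcases mul_eq_zero.mp e1 with h'' | h''
          all_goals first | linarith | (exact absurd h'' h1t) | (exact absurd h' h1t)
      have hmem : p ∈ openSegment ℝ x y := by
        have h1tpos : (0:ℝ) < 1 - t := by linarith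
        refine ⟨1/(1-t), -t/(1-t), by positivity, div_pos (by linarith) h1tpos,
          by field_simp; ring, ?_⟩
        rw [hxpt]
        match_scalars <;> (field_simp; try ring)
      have := hsc.openSegment_subset hx hyK hxy hmem
      exact (hKcl.frontier_eq ▸ hpfr).2 this
    rcases le_or_gt t 1 with htle | htgt
    · exact ⟨1 - t, t, by linarith, htnn, by ring, by rw [hxpt]; match_scalars <;> ring⟩
    · exfalso
      have ht0 : t ≠ 0 := by linarith
      have hpx : p ≠ x := by
        intro hE
        apply hpy
        apply e2_eq_of_coords
        · have h2 := hco 0; rw [← hE] at h2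
          rcases mul_eq_zero.mp (by linarith : t * (y 0 - p 0) = 0) with h' | h'
          · exact absurd h' ht0
          · linarith
        · have h2 := hco 1; rw [← hE] at h2
          rcases mul_eq_zero.mp (by linarith : t * (y 1 - p 1) = 0) with h' | h'
          · exact absurd h' ht0
          · linarith
      have hmem : y ∈ openSegment ℝ p x := by
        refine ⟨1 - 1/t, 1/t, ?_, by positivity, by ring, ?_⟩
        · have : 1/t < 1 := by rw [div_lt_one (by linarith)]; linarith
          linarith
        · rw [hxpt]
          match_scalars <;> (field_simp; try ring)
      have := hsc.openSegment_subset hpK hx hpx hmem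
      exact (hKcl.frontier_eq ▸ hyfr).2 this
  have key2 : ∀ z ∈ frontier K, h z = 0 → z = p ∨ z = y := by
    intro z hz hz0
    obtain ⟨α, β, hα, hβ, hαβ, hzeq⟩ := key1 z (hfrK hz) hz0
    rcases eq_or_lt_of_le hα with hα0 | hαpos
    · right; rw [← hzeq, ← hα0, zero_smul, zero_add]
      have : β = 1 := by linarith
      rw [this, one_smul]
    · rcases eq_or_lt_of_le hβ with hβ0 | hβpos
      · left; rw [← hzeq, ← hβ0, zero_smul, add_zero]
        have : α = 1 := by linarith
        rw [this, one_smul]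
      · exfalso
        have : z ∈ openSegment ℝ p y := ⟨α, β, hαpos, hβpos, hαβ, hzeq⟩
        have := hsc.openSegment_subset hpK hyK hpy this
        exact (hKcl.frontier_eq ▸ hz).2 this
  have harc : ∀ r, r ∈ Ioo 0 r3 ∨ r ∈ Ioo r3 P → h (f r) ≠ 0 := by
    intro r hr hr0
    have hrIcc : r ∈ Icc 0 P := by
      rcases hr with hr | hr
      · exact ⟨hr.1.le, by linarith [hr.2]⟩
      · exact ⟨by linarith [hr.1], hr.2.le⟩
    have hrIco : r ∈ Ico 0 P := ⟨hrIcc.1, by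
      rcases hr with hr | hr
      · linarith [hr.2]
      · exact hr.2⟩
    rcases key2 (f r) (memfr r hrIcc) hr0 with h' | h'
    · have : r = 0 := hfi hrIco m0 h'
      rcases hr with hr | hr
      · linarith [hr.1]
      · linarith [hr.1]
    · have : r = r3 := hfi hrIco m3 h'
      rcases hr with hr | hr
      · linarith [hr.2]
      · linarith [hr.1]
  have hFc : ContinuousOn (fun r => h (f r)) (Icc 0 P) := hcont.comp_continuousOn hfc
  have hA0 : h p' ≠ 0 := harc r2 (Or.inl ⟨h1, h2⟩)
  have hB0 : h y' ≠ 0 := harc r4 (Or.inr ⟨h3, h4⟩)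
  have hsign : h p' * h y' < 0 := by
    rcases lt_trichotomy (h p' * h y') 0 with hlt | he0 | hgtp
    · exact hlt
    · exact absurd (mul_eq_zero.mp he0) (by push_neg; exact ⟨hA0, hB0⟩)
    · exfalso
      rcases (mul_pos_iff.mp hgtp) with ⟨ha, hb⟩ | ⟨ha, hb⟩
      · -- both positive
        apply support_contra K hKcl hKcp hsc (y 1 - p 1) (p 0 - y 0)
          ((y 0 - p 0) * p 1 - (y 1 - p 1) * p 0) hcne ?_ p y hpK hyK hpy
          (by simpa only [hh] using hhp) (by simpa only [hh] using hhy)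
        intro x hx
        obtain ⟨r, hrIcc, hrfx⟩ := (hfim ▸ hx : x ∈ f '' Icc 0 P)
        have goal : 0 ≤ h x := by
          rcases eq_or_lt_of_le hrIcc.1 with hr0 | hrpos
          · rw [← hrfx, ← hr0]; exact le_of_eq hhp.symm
          rcases eq_or_lt_of_le hrIcc.2 with hrP | hrP
          · rw [← hrfx, hrP, hfP]; exact le_of_eq hhp.symm
          rcases lt_trichotomy r r3 with hrr | hrr3 | hrr
          · have := sign_const (F := fun r => h (f r)) (lo := 0) (hi := r3)
              (hFc.mono (Icc_subset_Icc le_rfl (by linarith)))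
              (fun s hs => harc s (Or.inl hs)) ⟨h1, h2⟩ ⟨hrpos, hrr⟩ ha
            rw [← hrfx]; linarith
          · rw [← hrfx, hrr3]; exact le_of_eq hhy.symm
          · have := sign_const (F := fun r => h (f r)) (lo := r3) (hi := P)
              (hFc.mono (Icc_subset_Icc (by linarith) le_rfl))
              (fun s hs => harc s (Or.inr hs)) ⟨h3, h4⟩ ⟨hrr, hrP⟩ hb
            rw [← hrfx]; linarith
        simpa only [hh] using goal
      · -- both negative
        have hcne' : -(y 1 - p 1) ≠ 0 ∨ -(p 0 - y 0) ≠ 0 := by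
          rcases hcne with h' | h'
          · left; exact neg_ne_zero.mpr h'
          · right; exact neg_ne_zero.mpr h'
        apply support_contra K hKcl hKcp hsc (-(y 1 - p 1)) (-(p 0 - y 0))
          (-((y 0 - p 0) * p 1 - (y 1 - p 1) * p 0)) hcne' ?_ p y hpK hyK hpy
          (by have := hhp; simp only [hh] at this; linarith)
          (by have := hhy; simp only [hh] at this; linarith)
        intro x hx
        obtain ⟨r, hrIcc, hrfx⟩ := (hfim ▸ hx : x ∈ f '' Icc 0 P)
        have goal : h x ≤ 0 := by
          rcases eq_or_lt_of_le hrIcc.1 with hr0 | hrpos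
          · rw [← hrfx, ← hr0]; exact le_of_eq hhp
          rcases eq_or_lt_of_le hrIcc.2 with hrP | hrP
          · rw [← hrfx, hrP, hfP]; exact le_of_eq hhp
          rcases lt_trichotomy r r3 with hrr | hrr3 | hrr
          · have := sign_const (F := fun r => -(h (f r))) (lo := 0) (hi := r3)
              ((hFc.mono (Icc_subset_Icc le_rfl (by linarith))).neg)
              (fun s hs hzz => harc s (Or.inl hs) (by linarith [neg_eq_zero.mp hzz]))
              ⟨h1, h2⟩ ⟨hrpos, hrr⟩ (by simpa using ha)
            rw [← hrfx]; beta_reduce at this; linarith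
          · rw [← hrfx, hrr3]; exact le_of_eq hhy
          · have := sign_const (F := fun r => -(h (f r))) (lo := r3) (hi := P)
              ((hFc.mono (Icc_subset_Icc (by linarith) le_rfl)).neg)
              (fun s hs hzz => harc s (Or.inr hs) (by linarith [neg_eq_zero.mp hzz]))
              ⟨h3, h4⟩ ⟨hrr, hrP⟩ (by simpa using hb)
            rw [← hrfx]; beta_reduce at this; linarith
        have goal' : 0 ≤ -(h x) := by linarith
        simp only [hh] at goal'; linarith
  -- a point z on both chords
  have hseg : ∃ z ∈ segment ℝ p' y', h z = 0 := by
    have hφc : Continuous fun τ : ℝ => h ((1 - τ) • p' + τ • y') := by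
      apply hcont.comp
      exact ((continuous_const.sub continuous_id).smul continuous_const).add
        (continuous_id.smul continuous_const)
    have hsimp0 : ((1:ℝ) - 0) • p' + (0:ℝ) • y' = p' := by simp
    have hsimp1 : ((1:ℝ) - 1) • p' + (1:ℝ) • y' = y' := by simp
    rcases mul_neg_iff.mp hsign with ⟨hap, hbn⟩ | ⟨han, hbp⟩
    · obtain ⟨τ, hτ, hτ0⟩ := intermediate_value_Icc' (by norm_num : (0:ℝ) ≤ 1)
        hφc.continuousOn (by rw [hsimp0, hsimp1]; exact ⟨hbn.le, hap.le⟩)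
      exact ⟨(1 - τ) • p' + τ • y', ⟨1 - τ, τ, by linarith [hτ.1, hτ.2], hτ.1, by ring, rfl⟩, hτ0⟩
    · obtain ⟨τ, hτ, hτ0⟩ := intermediate_value_Icc (by norm_num : (0:ℝ) ≤ 1)
        hφc.continuousOn (by rw [hsimp0, hsimp1]; exact ⟨han.le, hbp.le⟩)
      exact ⟨(1 - τ) • p' + τ • y', ⟨1 - τ, τ, by linarith [hτ.1, hτ.2], hτ.1, by ring, rfl⟩, hτ0⟩
  obtain ⟨z, hzseg', hz0⟩ := hseg
  have hzK : z ∈ K := (hsc.convex.segment_subset hp'K hy'K) hzseg'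
  have hzseg : z ∈ segment ℝ p y := key1 z hzK hz0
  -- metric endgame
  have d1 : dist p z + dist z y = dist p y := dist_add_dist_of_mem_segment hzseg
  have d2 : dist p' z + dist z y' = dist p' y' := dist_add_dist_of_mem_segment hzseg'
  have t1 : dist p y' ≤ dist p z + dist z y' := dist_triangle p z y'
  have t2 : dist p' y ≤ dist p' z + dist z y := dist_triangle p' z y
  have eq1 : dist p y' = dist p z + dist z y' := by linarith
  have eq2 : dist p' y = dist p' z + dist z y := by linarith
  have eq3 : dist p y = dist p y' := by linarith
  have eq4 : dist p' y' = dist p' y := by linarith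
  have hz_py' : z ∈ segment ℝ p y' := (dist_add_dist_eq_iff.mp eq1.symm).mem_segment
  have hz_p'y : z ∈ segment ℝ p' y := (dist_add_dist_eq_iff.mp eq2.symm).mem_segment
  have hyy'eq : y = y' := by
    by_cases hzp : z = p
    · have hzp' : z ≠ p' := by rw [hzp]; exact hpp'
      exact ray_endgame hzp' hz_p'y hzseg' eq4.symm
    · exact ray_endgame hzp hzseg hz_py' eq3
  exact hyy' hyy'eq


/-- Cutting a closed parametrized curve at interior position `t0`. -/
lemma cut_spec (P t0 : ℝ) (f : ℝ → E2) (hP : 0 < P) (ht0 : t0 ∈ Ico 0 P)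
    (hfc : ContinuousOn f (Icc 0 P)) (hfi : InjOn f (Ico 0 P)) (hfP : f P = f 0) :
    ContinuousOn (fun r => if t0 + r ≤ P then f (t0 + r) else f (t0 + r - P)) (Icc 0 P) ∧
    InjOn (fun r => if t0 + r ≤ P then f (t0 + r) else f (t0 + r - P)) (Ico 0 P) ∧
    (fun r => if t0 + r ≤ P then f (t0 + r) else f (t0 + r - P)) '' Icc 0 P = f '' Icc 0 P ∧
    (fun r => if t0 + r ≤ P then f (t0 + r) else f (t0 + r - P)) P
      = (fun r => if t0 + r ≤ P then f (t0 + r) else f (t0 + r - P)) 0 := by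
  obtain ⟨ht0a, ht0b⟩ := ht0
  set G : ℝ → E2 := fun r => if t0 + r ≤ P then f (t0 + r) else f (t0 + r - P) with hG
  have hGc : ContinuousOn G (Icc 0 P) := by
    rw [show Icc (0:ℝ) P = Icc 0 (P - t0) ∪ Icc (P - t0) P from
      (Icc_union_Icc_eq_Icc (by linarith) (by linarith)).symm]
    apply contOn_glue isClosed_Icc isClosed_Icc
    · have hc1 : ContinuousOn (fun r => f (t0 + r)) (Icc 0 (P - t0)) := by
        have hinner : ContinuousOn (fun r : ℝ => t0 + r) (Icc 0 (P - t0)) := by fun_prop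
        apply ContinuousOn.comp hfc hinner
        intro r hr
        rw [mem_Icc] at hr
        simp only [mem_Icc]
        constructor <;> linarith [hr.1, hr.2]
      apply hc1.congr
      intro r hr
      rw [mem_Icc] at hr
      simp only [hG]
      rw [if_pos (by linarith [hr.2])]
    · have hc2 : ContinuousOn (fun r => f (t0 + r - P)) (Icc (P - t0) P) := by
        have hinner : ContinuousOn (fun r : ℝ => t0 + r - P) (Icc (P - t0) P) := by fun_prop
        apply ContinuousOn.comp hfc hinner
        intro r hr
        rw [mem_Icc] at hr
        simp only [mem_Icc]
        constructor <;> linarith [hr.1, hr.2]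
      apply hc2.congr
      intro r hr
      rw [mem_Icc] at hr
      simp only [hG]
      rcases lt_or_eq_of_le (by linarith [hr.1] : P ≤ t0 + r) with h' | h'
      · rw [if_neg (by linarith)]
      · rw [if_pos (by linarith), ← h', sub_self]
        exact hfP
  have hkey : ∀ r ∈ Ico (0:ℝ) P,
      G r = f (if t0 + r < P then t0 + r else t0 + r - P) ∧
      (if t0 + r < P then t0 + r else t0 + r - P) ∈ Ico 0 P := by
    intro r hr
    by_cases h' : t0 + r < P
    · rw [if_pos h']
      exact ⟨by simp only [hG]; rw [if_pos h'.le], ⟨by linarith [hr.1], h'⟩⟩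
    · push_neg at h'
      rcases eq_or_lt_of_le h' with he | hlt
      · rw [if_neg (by linarith)]
        constructor
        · simp only [hG]; rw [if_pos (by linarith), ← he, show P - P = (0:ℝ) by ring]
          exact hfP
        · constructor <;> [linarith; linarith [hr.2]]
      · rw [if_neg (by linarith)]
        refine ⟨by simp only [hG]; rw [if_neg (by linarith)], ⟨by linarith, by linarith [hr.2]⟩⟩
  have hGi : InjOn G (Ico 0 P) := by
    intro s1 hs1 s2 hs2 heq
    obtain ⟨he1, hm1⟩ := hkey s1 hs1
    obtain ⟨he2, hm2⟩ := hkey s2 hs2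
    rw [he1, he2] at heq
    have := hfi hm1 hm2 heq
    by_cases c1 : t0 + s1 < P <;> by_cases c2 : t0 + s2 < P
    · rw [if_pos c1, if_pos c2] at this; linarith
    · rw [if_pos c1, if_neg c2] at this; push_neg at c2; linarith [hs2.2, hs1.1]
    · rw [if_neg c1, if_pos c2] at this; push_neg at c1; linarith [hs1.2, hs2.1]
    · rw [if_neg c1, if_neg c2] at this; linarith
  have hGim : G '' Icc 0 P = f '' Icc 0 P := by
    apply Subset.antisymm
    · rintro x ⟨r, hr, rfl⟩
      simp only [hG]
      by_cases h' : t0 + r ≤ P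
      · rw [if_pos h']; exact mem_image_of_mem f ⟨by linarith [hr.1], h'⟩
      · rw [if_neg h']; push_neg at h'
        exact mem_image_of_mem f ⟨by linarith, by linarith [hr.2]⟩
    · rintro x ⟨q, hq, rfl⟩
      rcases eq_or_lt_of_le hq.2 with hqP | hqP
      · -- q = P : use r = P - t0
        refine ⟨P - t0, ⟨by linarith, by linarith⟩, ?_⟩
        simp only [hG]
        rw [if_pos (by linarith), show t0 + (P - t0) = P by ring, hqP]
      · by_cases hc : t0 ≤ q
        · refine ⟨q - t0, ⟨by linarith, by linarith⟩, ?_⟩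
          simp only [hG]
          rw [if_pos (by linarith), show t0 + (q - t0) = q by ring]
        · push_neg at hc
          rcases eq_or_lt_of_le hq.1 with hq0 | hq0
          · refine ⟨P - t0, ⟨by linarith, by linarith⟩, ?_⟩
            simp only [hG]
            rw [if_pos (by linarith), show t0 + (P - t0) = P by ring, hfP, hq0]
          · refine ⟨q + P - t0, ⟨by linarith, by linarith⟩, ?_⟩
            simp only [hG]
            rw [if_neg (by push_neg; linarith), show t0 + (q + P - t0) - P = q by ring]
  have hGP : G P = G 0 := by
    simp only [hG]
    rcases eq_or_lt_of_le ht0a with h0 | h0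
    · rw [if_pos (by linarith), if_pos (by linarith), ← h0, zero_add, add_zero, hfP]
    · rw [if_neg (by push_neg; linarith), if_pos (by linarith),
        show t0 + P - P = t0 by ring, add_zero]
  exact ⟨hGc, hGi, hGim, hGP⟩


noncomputable def circ : ℝ → E2 := fun θ => (WithLp.equiv 2 (Fin 2 → ℝ)).symm ![Real.cos θ, Real.sin θ]

lemma circ_norm (θ : ℝ) : ‖circ θ‖ = 1 := by
  rw [EuclideanSpace.norm_eq]
  have h0 : circ θ 0 = Real.cos θ := by simp [circ, PiLp.toLp_apply]
  have h1 : circ θ 1 = Real.sin θ := by simp [circ, PiLp.toLp_apply]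
  rw [Fin.sum_univ_two, h0, h1]
  simp only [Real.norm_eq_abs, sq_abs]
  rw [show Real.cos θ ^ 2 + Real.sin θ ^ 2 = 1 from by
    rw [← Real.sin_sq_add_cos_sq θ]; ring]
  exact Real.sqrt_one

lemma circ_ne (θ : ℝ) : circ θ ≠ 0 := by
  intro h
  have := circ_norm θ
  rw [h, norm_zero] at this
  norm_num at this

lemma circ_cont : Continuous circ := by
  apply (PiLp.continuous_toLp 2 (fun _ : Fin 2 => ℝ)).comp
  apply continuous_pi
  intro i
  fin_cases i
  · simpa using Real.continuous_cos
  · simpa using Real.continuous_sin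

lemma circ_period : circ (2 * Real.pi) = circ 0 := by
  simp [circ, Real.cos_two_pi, Real.sin_two_pi]

lemma circ_inj : InjOn circ (Ico 0 (2 * Real.pi)) := by
  intro θ1 h1 θ2 h2 heq
  have hc : Real.cos θ1 = Real.cos θ2 := by
    have := congrArg (fun x : E2 => x 0) heq
    simpa [circ, PiLp.toLp_apply] using this
  have hs : Real.sin θ1 = Real.sin θ2 := by
    have := congrArg (fun x : E2 => x 1) heq
    simpa [circ, PiLp.toLp_apply] using this
  have := Real.Angle.cos_sin_inj hc hs
  obtain ⟨k, hk⟩ := Real.Angle.angle_eq_iff_two_pi_dvd_sub.mp this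
  have hpi := Real.pi_pos
  have hk0 : (k:ℝ) = 0 := by
    by_contra hkne
    have h1' : (1:ℝ) ≤ |(k:ℝ)| := by
      have : k ≠ 0 := fun h => hkne (by rw [h]; norm_num)
      exact_mod_cast Int.one_le_abs (by exact_mod_cast this)
    have : |θ1 - θ2| < 2 * Real.pi := by
      rw [abs_lt]; constructor <;> [linarith [h1.2, h2.1, h1.1, h2.2]; linarith [h1.2, h2.1]]
    rw [hk, abs_mul] at this
    have h2pi : |2 * Real.pi| = 2 * Real.pi := abs_of_pos (by linarith)
    rw [h2pi] at this
    nlinarith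
  rw [hk0, mul_zero] at hk
  linarith [hk]


set_option maxHeartbeats 1000000 in
/-- Since `∂Ω` is a topological circle, it coincides with the frontier of `closure Ω`. -/
lemma frontier_eq_of_circle (Ω : Set E2) (hΩo : IsOpen Ω) (hb : IsBounded Ω) (hne : Ω.Nonempty)
    (hKconv : Convex ℝ (closure Ω))
    (P : ℝ) (hP : 0 < P) (f : ℝ → E2) (hfc : ContinuousOn f (Icc 0 P))
    (hfi : InjOn f (Ico 0 P)) (hfP : f P = f 0) (hfim : f '' Icc 0 P = frontier Ω) :
    frontier Ω = frontier (closure Ω) := by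
  set K := closure Ω with hK
  have hKcl : IsClosed K := isClosed_closure
  have hKcp : IsCompact K := hb.isCompact_closure
  refine Subset.antisymm ?_ frontier_closure_subset
  intro w hw
  by_contra hwK
  have hwint : w ∈ interior K := by
    have hwcl : w ∈ K := frontier_subset_closure hw
    by_contra hwi
    exact hwK (by rw [hKcl.frontier_eq]; exact ⟨hwcl, hwi⟩)
  -- parameter of w
  have hw' : w ∈ f '' Icc 0 P := hfim ▸ hw
  obtain ⟨t0', ht0', hft0'⟩ := hw'
  have ht0ex : ∃ t0 ∈ Ico 0 P, f t0 = w := by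
    rcases eq_or_lt_of_le ht0'.2 with hP' | hP'
    · exact ⟨0, ⟨le_rfl, hP⟩, by rw [← hfP, ← hP']; exact hft0'⟩
    · exact ⟨t0', ⟨ht0'.1, hP'⟩, hft0'⟩
  obtain ⟨t0, ht0, hft0⟩ := ht0ex
  -- cut the curve at w
  obtain ⟨hGc, hGi, hGim, hGP⟩ := cut_spec P t0 f hP ht0 hfc hfi hfP
  set G : ℝ → E2 := fun r => if t0 + r ≤ P then f (t0 + r) else f (t0 + r - P) with hGdef
  have hG0 : G 0 = w := by
    simp only [hGdef]
    rw [if_pos (by linarith [ht0.2]), add_zero, hft0]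
  have hGPw : G P = w := by rw [hGP, hG0]
  have hGimΩ : G '' Icc 0 P = frontier Ω := by rw [hGim, hfim]
  -- frontier K inside the cut curve
  have hfrsub : frontier K ⊆ frontier Ω := frontier_closure_subset
  set R : Set ℝ := Icc 0 P ∩ G ⁻¹' (frontier K) with hR
  have hRcl : IsClosed R := hGc.preimage_isClosed_of_isClosed isClosed_Icc isClosed_frontier
  have hRcp : IsCompact R := isCompact_Icc.of_isClosed_subset hRcl inter_subset_left
  have hRsub : R ⊆ Ico 0 P := by
    rintro r ⟨hrIcc, hrfr⟩
    constructor
    · exact hrIcc.1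
    · rcases eq_or_lt_of_le hrIcc.2 with h' | h'
      · exfalso
        rw [mem_preimage, h', hGPw] at hrfr
        exact hwK hrfr
      · exact h'
  have hbij : BijOn G R (frontier K) := by
    refine ⟨fun r hr => hr.2, fun r1 h1 r2 h2 heq => hGi (hRsub h1) (hRsub h2) heq, ?_⟩
    intro x hx
    obtain ⟨r, hr, hrx⟩ := (hGimΩ ▸ hfrsub hx : x ∈ G '' Icc 0 P)
    exact ⟨r, ⟨hr, by rw [mem_preimage, hrx]; exact hx⟩, hrx⟩
  -- frontier K is nonempty
  have hKne : K.Nonempty := hne.closure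
  have hfrne : (frontier K).Nonempty := by
    by_contra hfe
    rw [not_nonempty_iff_eq_empty] at hfe
    have hKint : K = interior K := by
      apply Subset.antisymm _ interior_subset
      intro x hx
      by_contra hxi
      have : x ∈ frontier K := by rw [hKcl.frontier_eq]; exact ⟨hx, hxi⟩
      rw [hfe] at this
      exact this
    have hKop : IsOpen K := by rw [hKint]; exact isOpen_interior
    have hKuniv : K = univ := IsClopen.eq_univ ⟨hKcl, hKop⟩ hKne
    have hbdd : IsBounded (univ : Set E2) := hKuniv ▸ hKcp.isBounded
    obtain ⟨C, hC⟩ := isBounded_iff_forall_norm_le.mp hbdd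
    have hCnorm := hC ((max C 0 + 1) • circ 0) (mem_univ _)
    rw [norm_smul, circ_norm, mul_one, Real.norm_eq_abs,
      abs_of_pos (by positivity : (0:ℝ) < max C 0 + 1)] at hCnorm
    have : C ≤ max C 0 := le_max_left _ _
    linarith
  have hRne : R.Nonempty := by
    obtain ⟨x, hx⟩ := hfrne
    obtain ⟨r, hr, hrx⟩ := (hGimΩ ▸ hfrsub hx : x ∈ G '' Icc 0 P)
    exact ⟨r, hr, by rw [mem_preimage, hrx]; exact hx⟩
  -- the inverse of G on R, as a continuous injection frontier K → ℝ
  haveI : CompactSpace R := isCompact_iff_compactSpace.mp hRcp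
  have hGcR : Continuous (hbij.mapsTo.restrict G R (frontier K)) :=
    (hGc.mono (hRsub.trans Ico_subset_Icc_self)).mapsToRestrict hbij.mapsTo
  have hgequiv : Continuous (hbij.equiv G) := hGcR
  set homeo := Continuous.homeoOfEquivCompactToT2 (f := hbij.equiv G) hgequiv with hhomeo
  set ψ : frontier K → ℝ := fun x => ((homeo.symm x : R) : ℝ) with hψ
  have hψc : Continuous ψ := continuous_subtype_val.comp homeo.symm.continuous
  have hψi : Function.Injective ψ :=
    Subtype.val_injective.comp homeo.symm.injective
  -- radial map from the circle onto frontier K via the gauge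
  obtain ⟨o, ho⟩ := hne
  have hoint : o ∈ interior K := interior_maximal subset_closure hΩo ho
  set K' : Set E2 := (fun x => -o + x) '' K with hK'
  have hK'conv : Convex ℝ K' := hKconv.translate (-o)
  have htransl : K' = (Homeomorph.addLeft (-o)) '' K := rfl
  have h0int : (0 : E2) ∈ interior K' := by
    rw [htransl, ← Homeomorph.image_interior]
    exact ⟨o, hoint, by simp⟩
  have hK'nhds : K' ∈ nhds 0 := mem_interior_iff_mem_nhds.mp h0int
  have hK'cp : IsCompact K' := hKcp.image (continuous_const.add continuous_id)
  have hK'vb : Bornology.IsVonNBounded ℝ K' :=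
    (NormedSpace.isVonNBounded_iff ℝ).mpr hK'cp.isBounded
  have habs : Absorbent ℝ K' := absorbent_nhds_zero hK'nhds
  have hgpos : ∀ θ, 0 < gauge K' (circ θ) :=
    fun θ => (gauge_pos habs hK'vb).mpr (circ_ne θ)
  set κ : ℝ → E2 := fun θ => o + (gauge K' (circ θ))⁻¹ • circ θ with hκ
  have hκfr : ∀ θ, κ θ ∈ frontier K := by
    intro θ
    have h1 : gauge K' ((gauge K' (circ θ))⁻¹ • circ θ) = 1 := by
      rw [gauge_smul_of_nonneg (inv_nonneg.mpr (hgpos θ).le), smul_eq_mul,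
        inv_mul_cancel₀ (hgpos θ).ne']
    have h2 : (gauge K' (circ θ))⁻¹ • circ θ ∈ frontier K' :=
      (gauge_eq_one_iff_mem_frontier hK'conv hK'nhds).mp h1
    rw [htransl, ← Homeomorph.image_frontier] at h2
    obtain ⟨z, hz, hzeq⟩ := h2
    have : κ θ = z := by
      simp only [hκ]
      simp only [Homeomorph.coe_addLeft] at hzeq
      rw [← hzeq]
      abel
    rw [this]
    exact hz
  have hgc : Continuous fun θ => gauge K' (circ θ) :=
    (continuous_gauge hK'conv hK'nhds).comp circ_cont
  have hκc : Continuous κ :=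
    continuous_const.add ((hgc.inv₀ (fun θ => (hgpos θ).ne')).smul circ_cont)
  have hκinj : InjOn κ (Ico 0 (2 * Real.pi)) := by
    intro θ1 h1 θ2 h2 heq
    have heq2 : (gauge K' (circ θ1))⁻¹ • circ θ1 = (gauge K' (circ θ2))⁻¹ • circ θ2 :=
      add_left_cancel heq
    have hn : (gauge K' (circ θ1))⁻¹ = (gauge K' (circ θ2))⁻¹ := by
      have := congrArg norm heq2
      rwa [norm_smul, norm_smul, circ_norm, circ_norm, mul_one, mul_one,
        Real.norm_eq_abs, Real.norm_eq_abs,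
        abs_of_pos (inv_pos.mpr (hgpos θ1)), abs_of_pos (inv_pos.mpr (hgpos θ2))] at this
    rw [hn] at heq2
    have hcirc : circ θ1 = circ θ2 :=
      smul_right_injective E2 (inv_ne_zero (hgpos θ2).ne') heq2
    exact circ_inj h1 h2 hcirc
  -- the circle injects continuously into ℝ: contradiction
  set η : ℝ → ℝ := fun θ => ψ ⟨κ θ, hκfr θ⟩ with hη
  have hηc : Continuous η := hψc.comp (Continuous.subtype_mk hκc _)
  have hηi : InjOn η (Ico 0 (2 * Real.pi)) := by
    intro θ1 h1 θ2 h2 heq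
    have := hψi heq
    have hkk : κ θ1 = κ θ2 := congrArg Subtype.val this
    exact hκinj h1 h2 hkk
  have hηP : η (2 * Real.pi) = η 0 := by
    simp only [hη]
    congr 1
    apply Subtype.ext
    simp only [hκ, circ_period]
  exact no_circle_inj (by positivity) hηc.continuousOn hηi hηP


set_option maxHeartbeats 1000000 in
lemma master (Ω : Set E2) (hΩo : IsOpen Ω) (hb : IsBounded Ω) (hne : Ω.Nonempty)
    (hsc : StrictConvex ℝ (closure Ω))
    (M : ℝ) (hM : 0 < M)
    (υ : ℝ → E2) (hυc : ContinuousOn υ (Icc 0 M)) (hυi : InjOn υ (Icc 0 M))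
    (Υ : Set E2) (hΥ : Υ = υ '' Icc 0 M) (hΥsub : Υ ⊆ frontier Ω)
    (a b : E2) (ha : υ M = a) (hbb : υ 0 = b)
    (Γ : Set E2) (hΓ : Γ = frontier Ω \ Υ)
    (L : ℝ) (hL : 0 < L)
    (xp : ℝ → E2) (hxpc : ContinuousOn xp (Icc 0 L)) (hxpi : InjOn xp (Icc 0 L))
    (hxp0 : xp 0 = a) (hxpL : xp L = b) (hxpim : xp '' Ioo 0 L = Γ)
    (Ba : Set ℝ)
    (hBa : Ba = {s ∈ Ioo (0:ℝ) L | infDist (xp s) Υ = dist (xp s) a})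
    (hBane : Ba.Nonempty)
    (S : Set E2)
    (hS : S = {x ∈ Γ | ∃ y ∈ υ '' Ioo 0 M, dist x y = infDist x Υ}) :
    sSup Ba ∈ Ba ∧ (S.Nonempty → sSup Ba = sInf {s ∈ Ioo (0:ℝ) L | xp s ∈ S}) := by
  have hπ : Real.pi > 0 := Real.pi_pos  -- dummy
  set K := closure Ω with hK
  have hKcl : IsClosed K := isClosed_closure
  have hKcp : IsCompact K := hb.isCompact_closure
  have hKconv : Convex ℝ K := hsc.convex
  -- basic membership facts
  have hΥcp : IsCompact Υ := hΥ ▸ (isCompact_Icc.image_of_continuousOn hυc)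
  have hΥne : Υ.Nonempty := hΥ ▸ ⟨υ 0, mem_image_of_mem _ ⟨le_rfl, hM.le⟩⟩
  have haΥ : a ∈ Υ := hΥ ▸ ⟨M, ⟨hM.le, le_rfl⟩, ha⟩
  have hbΥ : b ∈ Υ := hΥ ▸ ⟨0, ⟨le_rfl, hM.le⟩, hbb⟩
  have hab : a ≠ b := by
    intro h
    have : υ M = υ 0 := by rw [ha, hbb, h]
    have := hυi ⟨hM.le, le_rfl⟩ ⟨le_rfl, hM.le⟩ this
    linarith
  have hΓmem : ∀ s ∈ Ioo (0:ℝ) L, xp s ∈ Γ := fun s hs => hxpim ▸ mem_image_of_mem xp hs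
  have hΓΥ : ∀ s ∈ Ioo (0:ℝ) L, xp s ∉ Υ := by
    intro s hs h
    exact (hΓ ▸ hΓmem s hs).2 h
  -- the full boundary parametrization
  set P : ℝ := L + M with hPdef
  have hP : 0 < P := by linarith
  set f : ℝ → E2 := fun r => if r ≤ L then xp r else υ (r - L) with hf
  have hfL : ∀ r ∈ Icc (0:ℝ) L, f r = xp r := by
    intro r hr; simp only [hf]; rw [if_pos hr.2]
  have hfM : ∀ u ∈ Icc (0:ℝ) M, f (L + u) = υ u := by
    intro u hu
    simp only [hf]
    rcases eq_or_lt_of_le hu.1 with h0 | h0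
    · rw [if_pos (by linarith), ← h0, add_zero, hxpL, ← hbb]
    · rw [if_neg (by push_neg; linarith), add_sub_cancel_left]
  have hfc : ContinuousOn f (Icc 0 P) := by
    rw [show Icc (0:ℝ) P = Icc 0 L ∪ Icc L P from
      (Icc_union_Icc_eq_Icc (by linarith) (by linarith)).symm]
    apply contOn_glue isClosed_Icc isClosed_Icc
    · exact hxpc.congr hfL
    · have hc2 : ContinuousOn (fun r => υ (r - L)) (Icc L P) := by
        have hinner : ContinuousOn (fun r : ℝ => r - L) (Icc L P) := by fun_prop
        apply ContinuousOn.comp hυc hinner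
        intro r hr
        rw [mem_Icc] at hr
        simp only [mem_Icc]
        constructor <;> linarith [hr.1, hr.2]
      apply hc2.congr
      intro r hr
      rw [mem_Icc] at hr
      simp only [hf]
      rcases eq_or_lt_of_le hr.1 with h0 | h0
      · rw [if_pos (by linarith), ← h0, sub_self, hxpL, ← hbb]
      · rw [if_neg (by push_neg; linarith)]
  have hfP : f P = f 0 := by
    simp only [hf]
    rw [if_neg (by push_neg; simp only [hPdef]; linarith), if_pos hL.le,
      show P - L = M by simp only [hPdef]; ring, hxp0, ha]
  have hfi : InjOn f (Ico 0 P) := by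
    intro r1 hr1 r2 hr2 heq
    by_cases c1 : r1 ≤ L <;> by_cases c2 : r2 ≤ L
    · exact hxpi ⟨hr1.1, c1⟩ ⟨hr2.1, c2⟩ (by
        rw [hfL r1 ⟨hr1.1, c1⟩, hfL r2 ⟨hr2.1, c2⟩] at heq; exact heq)
    · exfalso
      push_neg at c2
      have h2m : r2 - L ∈ Icc (0:ℝ) M := ⟨by linarith, by linarith [hr2.2]⟩
      have he2 : f r2 = υ (r2 - L) := by simp only [hf]; rw [if_neg (by push_neg; exact c2)]
      rw [hfL r1 ⟨hr1.1, c1⟩, he2] at heq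
      have hυm : υ (r2 - L) ∈ Υ := hΥ ▸ mem_image_of_mem υ h2m
      rcases eq_or_lt_of_le hr1.1 with h0 | h0
      · -- r1 = 0 : a = υ (r2 - L) → r2 - L = M → r2 = P, contradiction
        rw [← h0, hxp0] at heq
        have : M = r2 - L := hυi ⟨hM.le, le_rfl⟩ h2m (by rw [ha]; exact heq)
        have : r2 = P := by simp only [hPdef]; linarith
        linarith [hr2.2]
      · rcases eq_or_lt_of_le c1 with hL1 | hL1
        · -- r1 = L : b = υ (r2 - L) → r2 - L = 0 → r2 = L, contradiction
          rw [hL1, hxpL] at heq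
          have : (0:ℝ) = r2 - L := hυi ⟨le_rfl, hM.le⟩ h2m (by rw [hbb]; exact heq)
          linarith
        · exact hΓΥ r1 ⟨h0, hL1⟩ (heq ▸ hυm)
    · exfalso
      push_neg at c1
      have h1m : r1 - L ∈ Icc (0:ℝ) M := ⟨by linarith, by linarith [hr1.2]⟩
      have he1 : f r1 = υ (r1 - L) := by simp only [hf]; rw [if_neg (by push_neg; exact c1)]
      rw [hfL r2 ⟨hr2.1, c2⟩, he1] at heq
      have hυm : υ (r1 - L) ∈ Υ := hΥ ▸ mem_image_of_mem υ h1m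
      rcases eq_or_lt_of_le hr2.1 with h0 | h0
      · rw [← h0, hxp0] at heq
        have : M = r1 - L := hυi ⟨hM.le, le_rfl⟩ h1m (by rw [ha]; exact heq.symm)
        have : r1 = P := by simp only [hPdef]; linarith
        linarith [hr1.2]
      · rcases eq_or_lt_of_le c2 with hL2 | hL2
        · rw [hL2, hxpL] at heq
          have : (0:ℝ) = r1 - L := hυi ⟨le_rfl, hM.le⟩ h1m (by rw [hbb]; exact heq.symm)
          linarith
        · exact hΓΥ r2 ⟨h0, hL2⟩ (heq ▸ hυm)
    · push_neg at c1 c2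
      have : r1 - L = r2 - L := by
        apply hυi ⟨by linarith, by linarith [hr1.2]⟩ ⟨by linarith, by linarith [hr2.2]⟩
        have he1 : f r1 = υ (r1 - L) := by simp only [hf]; rw [if_neg (by push_neg; exact c1)]
        have he2 : f r2 = υ (r2 - L) := by simp only [hf]; rw [if_neg (by push_neg; exact c2)]
        rw [← he1, ← he2]; exact heq
      linarith
  have hfrontier : frontier Ω = Γ ∪ Υ := by
    rw [hΓ]
    rw [diff_union_self, union_eq_self_of_subset_right hΥsub]
  have hfim : f '' Icc 0 P = frontier Ω := by
    apply Subset.antisymm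
    · rintro x ⟨r, hr, rfl⟩
      by_cases c : r ≤ L
      · rw [hfL r ⟨hr.1, c⟩]
        rcases eq_or_lt_of_le hr.1 with h0 | h0
        · rw [← h0, hxp0]; exact hΥsub haΥ
        rcases eq_or_lt_of_le c with hL1 | hL1
        · rw [hL1, hxpL]; exact hΥsub hbΥ
        · rw [hfrontier]; exact Or.inl (hΓmem r ⟨h0, hL1⟩)
      · push_neg at c
        have : f r = υ (r - L) := by simp only [hf]; rw [if_neg (by push_neg; exact c)]
        rw [this]
        exact hΥsub (hΥ ▸ mem_image_of_mem υ ⟨by linarith, by linarith [hr.2]⟩)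
    · intro x hx
      rw [hfrontier] at hx
      rcases hx with hx | hx
      · obtain ⟨s, hs, rfl⟩ := hxpim ▸ hx
        exact ⟨s, ⟨hs.1.le, by linarith [hs.2]⟩, hfL s ⟨hs.1.le, hs.2.le⟩⟩
      · obtain ⟨u, hu, rfl⟩ := hΥ ▸ hx
        exact ⟨L + u, ⟨by linarith [hu.1], by simp only [hPdef]; linarith [hu.2]⟩, hfM u hu⟩
  have hfr : frontier Ω = frontier K :=
    frontier_eq_of_circle Ω hΩo hb hne hKconv P hP f hfc hfi hfP hfim
  have hfimK : f '' Icc 0 P = frontier K := by rw [hfim, hfr]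
  -- nearest point machinery
  have nearest : ∀ x : E2, ∃ u ∈ Icc (0:ℝ) M, infDist x Υ = dist x (υ u) := by
    intro x
    obtain ⟨y, hyΥ, hyd⟩ := hΥcp.exists_infDist_eq_dist hΥne x
    obtain ⟨u, hu, rfl⟩ := hΥ ▸ hyΥ
    exact ⟨u, hu, hyd⟩
  have minprop : ∀ (x : E2) (y : E2), y ∈ Υ → infDist x Υ = dist x y →
      ∀ w ∈ Υ, dist x y ≤ dist x w := by
    intro x y hy heq w hw
    rw [← heq]
    exact infDist_le_dist_of_mem hw
  -- THE key monotonicity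
  have mono : ∀ s s' u u', s ∈ Ioo (0:ℝ) L → s' ∈ Ioo (0:ℝ) L → s < s' →
      u ∈ Icc (0:ℝ) M → u' ∈ Icc (0:ℝ) M →
      (∀ w ∈ Υ, dist (xp s) (υ u) ≤ dist (xp s) w) →
      (∀ w ∈ Υ, dist (xp s') (υ u') ≤ dist (xp s') w) → u' ≤ u := by
    intro s s' u u' hs hs' hss hu hu' hmin hmin'
    by_contra hlt
    push_neg at hlt
    obtain ⟨hGc, hGi, hGim, hGP⟩ := cut_spec P s f hP ⟨hs.1.le, by simp only [hPdef]; linarith [hs.2]⟩ hfc hfi hfP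
    set G : ℝ → E2 := fun r => if s + r ≤ P then f (s + r) else f (s + r - P) with hGdef
    have hG0 : G 0 = xp s := by
      simp only [hGdef]
      rw [if_pos (by simp only [hPdef]; linarith [hs.2]), add_zero,
        hfL s ⟨hs.1.le, hs.2.le⟩]
    have hGr2 : G (s' - s) = xp s' := by
      simp only [hGdef]
      rw [show s + (s' - s) = s' by ring, if_pos (by simp only [hPdef]; linarith [hs'.2]),
        hfL s' ⟨hs'.1.le, hs'.2.le⟩]
    have hGr3 : G (L + u - s) = υ u := by
      simp only [hGdef]
      rw [show s + (L + u - s) = L + u by ring,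
        if_pos (by simp only [hPdef]; linarith [hu.2]), hfM u hu]
    have hGr4 : G (L + u' - s) = υ u' := by
      simp only [hGdef]
      rw [show s + (L + u' - s) = L + u' by ring,
        if_pos (by simp only [hPdef]; linarith [hu'.2]), hfM u' hu']
    apply cross_key K hKcl hKcp hsc P G hGc hGi (hGim.trans hfimK) hGP
      (s' - s) (L + u - s) (L + u' - s)
      (by linarith) (by linarith [hs'.2, hu.1]) (by linarith) (by simp only [hPdef]; linarith [hu'.2, hs.1])
    · rw [hG0, hGr3, hGr4]
      exact hmin (υ u') (hΥ ▸ mem_image_of_mem υ hu')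
    · rw [hGr2, hGr3, hGr4]
      exact hmin' (υ u) (hΥ ▸ mem_image_of_mem υ hu)
  -- membership in Ba
  have memBa : ∀ s, s ∈ Ba ↔ s ∈ Ioo (0:ℝ) L ∧ infDist (xp s) Υ = dist (xp s) a := by
    intro s; rw [hBa]; exact mem_sep_iff
  have hBasub : Ba ⊆ Ioo 0 L := fun s hs => ((memBa s).mp hs).1
  have hBabdd : BddAbove Ba := ⟨L, fun x hx => (hBasub hx).2.le⟩
  -- sSup Ba ∈ Ba
  set σ : ℝ := sSup Ba with hσ
  have hσcl : σ ∈ closure Ba := csSup_mem_closure hBane hBabdd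
  set F : ℝ → ℝ := fun t => infDist (xp t) Υ - dist (xp t) a with hF
  have hFc : ContinuousOn F (Icc 0 L) := by
    apply ContinuousOn.sub
    · exact (continuous_infDist_pt Υ).comp_continuousOn hxpc
    · exact (Continuous.dist continuous_id continuous_const).comp_continuousOn hxpc
  set C : Set ℝ := Icc 0 L ∩ F ⁻¹' {0} with hC
  have hCcl : IsClosed C := hFc.preimage_isClosed_of_isClosed isClosed_Icc isClosed_singleton
  have hBaC : Ba ⊆ C := by
    intro s hs
    obtain ⟨hsIoo, hseq⟩ := (memBa s).mp hs
    exact ⟨⟨hsIoo.1.le, hsIoo.2.le⟩, by simp only [hF, mem_preimage, mem_singleton_iff]; linarith⟩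
  have hσC : σ ∈ C := hCcl.closure_subset ((closure_mono hBaC) hσcl)
  have hσpos : 0 < σ := by
    obtain ⟨s0, hs0⟩ := hBane
    have := le_csSup hBabdd hs0
    linarith [(hBasub hs0).1]
  have hσL : σ ≠ L := by
    intro hσL
    have := hσC.2
    simp only [hF, mem_preimage, mem_singleton_iff, hσL] at this
    rw [hxpL, infDist_zero_of_mem hbΥ] at this
    have : dist b a = 0 := by linarith
    exact hab (dist_eq_zero.mp this).symm
  have hσBa : σ ∈ Ba := by
    rw [memBa]
    refine ⟨⟨hσpos, lt_of_le_of_ne hσC.1.2 hσL⟩, ?_⟩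
    have := hσC.2
    simp only [hF, mem_preimage, mem_singleton_iff] at this
    linarith
  refine ⟨hσBa, ?_⟩
  -- now the equality statement
  intro hSne
  set T : Set ℝ := {s ∈ Ioo (0:ℝ) L | xp s ∈ S} with hT
  have hTne : T.Nonempty := by
    obtain ⟨x, hx⟩ := hSne
    have hxΓ : x ∈ Γ := (hS ▸ hx).1
    obtain ⟨s, hs, rfl⟩ := hxpim ▸ hxΓ
    exact ⟨s, hs, hx⟩
  have hTbdd : BddBelow T := ⟨0, fun t ht => ht.1.1.le⟩
  -- minimality at σ
  have hminσ : ∀ w ∈ Υ, dist (xp σ) (υ M) ≤ dist (xp σ) w := by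
    have := ((memBa σ).mp hσBa).2
    rw [ha]
    exact minprop (xp σ) a haΥ this
  -- every element of T is ≥ σ
  have claim1 : ∀ t ∈ T, σ ≤ t := by
    intro t ht
    by_contra hlt
    push_neg at hlt
    obtain ⟨htIoo, htS⟩ := ht
    obtain ⟨y, hy, hyd⟩ := (hS ▸ htS).2
    obtain ⟨u, hu, rfl⟩ := hy
    have hmint : ∀ w ∈ Υ, dist (xp t) (υ u) ≤ dist (xp t) w :=
      minprop (xp t) (υ u) (hΥ ▸ mem_image_of_mem υ ⟨hu.1.le, hu.2.le⟩) hyd.symm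
    have := mono t σ u M htIoo ((memBa σ).mp hσBa).1 hlt ⟨hu.1.le, hu.2.le⟩
      ⟨hM.le, le_rfl⟩ hmint hminσ
    linarith [hu.2]
  have hle1 : σ ≤ sInf T := le_csInf hTne claim1
  have hle2 : sInf T ≤ σ := by
    by_contra hgt
    push_neg at hgt
    obtain ⟨t0, ht0⟩ := hTne
    have ht0' : sInf T ≤ t0 := csInf_le hTbdd ht0
    set s1 : ℝ := (σ + sInf T) / 2 with hs1
    have hs1a : σ < s1 := by simp only [hs1]; linarith
    have hs1b : s1 < sInf T := by simp only [hs1]; linarith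
    have hs1Ioo : s1 ∈ Ioo (0:ℝ) L := ⟨by linarith, by linarith [ht0.1.2]⟩
    obtain ⟨u1, hu1, hu1d⟩ := nearest (xp s1)
    have hmins1 : ∀ w ∈ Υ, dist (xp s1) (υ u1) ≤ dist (xp s1) w :=
      minprop (xp s1) (υ u1) (hΥ ▸ mem_image_of_mem υ hu1) hu1d
    rcases eq_or_lt_of_le hu1.2 with huM | huM
    · -- u1 = M : s1 ∈ Ba, contradicting s1 > σ
      have : s1 ∈ Ba := by
        rw [memBa]
        refine ⟨hs1Ioo, ?_⟩
        rw [hu1d, huM, ha]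
      have := le_csSup hBabdd this
      linarith
    rcases eq_or_lt_of_le hu1.1 with hu0 | hu0
    · -- u1 = 0 : apply mono with t0
      obtain ⟨y, hy, hyd⟩ := (hS ▸ ht0.2).2
      obtain ⟨u, hu, rfl⟩ := hy
      have hmint0 : ∀ w ∈ Υ, dist (xp t0) (υ u) ≤ dist (xp t0) w :=
        minprop (xp t0) (υ u) (hΥ ▸ mem_image_of_mem υ ⟨hu.1.le, hu.2.le⟩) hyd.symm
      have := mono s1 t0 u1 u hs1Ioo ht0.1 (by linarith) hu1 ⟨hu.1.le, hu.2.le⟩ hmins1 hmint0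
      rw [← hu0] at this
      linarith [hu.1]
    · -- u1 interior : s1 ∈ T, contradicting s1 < sInf T
      have hs1T : s1 ∈ T := by
        refine ⟨hs1Ioo, ?_⟩
        rw [hS]
        exact ⟨hΓmem s1 hs1Ioo, ⟨υ u1, mem_image_of_mem υ ⟨hu0, huM⟩, hu1d.symm⟩⟩
      have := csInf_le hTbdd hs1T
      linarith
  linarith [hle1, hle2]


/-- with `Γ` parametrized by arclength `xp : [0,L] → ∂Ω` from `a` to `b`
(the endpoints of the complementary closed arc `Υ`, whose relative interior is
`υ '' Ioo 0 M`), the sets `B_a = {s : dist(xp s, Υ) = |xp s - a|}`,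
`B_b = {s : dist(xp s, Υ) = |xp s - b|}` satisfy: `sup B_a ∈ B_a`, `inf B_b ∈ B_b`, and if
`S = {x ∈ Γ : dist(x, Υ) is realized at a point of Υ°}` is nonempty, then
`sup B_a = inf (xp⁻¹ S)` and `inf B_b = sup (xp⁻¹ S)`. -/
theorem sup_Ba_attained_and_equals_inf_S
    (Ω : Set E2) (hΩo : IsOpen Ω) (hb : IsBounded Ω) (hne : Ω.Nonempty)
    (hsc : StrictConvex ℝ (closure Ω))
    (M : ℝ) (hM : 0 < M)
    (υ : ℝ → E2) (hυc : ContinuousOn υ (Icc 0 M)) (hυi : InjOn υ (Icc 0 M))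
    (Υ : Set E2) (hΥ : Υ = υ '' Icc 0 M) (hΥsub : Υ ⊆ frontier Ω)
    (a b : E2) (ha : υ M = a) (hbb : υ 0 = b)
    (Γ : Set E2) (hΓ : Γ = frontier Ω \ Υ)
    (L : ℝ) (hL : 0 < L)
    (xp : ℝ → E2) (hxpc : ContinuousOn xp (Icc 0 L)) (hxpi : InjOn xp (Icc 0 L))
    (hxp0 : xp 0 = a) (hxpL : xp L = b) (hxpim : xp '' Ioo 0 L = Γ)
    (Ba Bb : Set ℝ)
    (hBa : Ba = {s ∈ Ioo (0:ℝ) L | infDist (xp s) Υ = dist (xp s) a})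
    (hBb : Bb = {s ∈ Ioo (0:ℝ) L | infDist (xp s) Υ = dist (xp s) b})
    (hBane : Ba.Nonempty) (hBbne : Bb.Nonempty)
    (S : Set E2)
    (hS : S = {x ∈ Γ | ∃ y ∈ υ '' Ioo 0 M, dist x y = infDist x Υ}) :
    sSup Ba ∈ Ba ∧ sInf Bb ∈ Bb ∧
      (S.Nonempty →
        sSup Ba = sInf {s ∈ Ioo (0:ℝ) L | xp s ∈ S} ∧
        sInf Bb = sSup {s ∈ Ioo (0:ℝ) L | xp s ∈ S}) := by
  obtain ⟨h1, h2⟩ := master Ω hΩo hb hne hsc M hM υ hυc hυi Υ hΥ hΥsub a b ha hbb Γ hΓ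
    L hL xp hxpc hxpi hxp0 hxpL hxpim Ba hBa hBane S hS
  -- reflected system
  set υ' : ℝ → E2 := fun r => υ (M - r) with hυ'
  set xp' : ℝ → E2 := fun s => xp (L - s) with hxp'
  have hmapM : MapsTo (fun r : ℝ => M - r) (Icc 0 M) (Icc 0 M) := by
    intro r hr
    rw [mem_Icc] at hr
    simp only [mem_Icc]
    constructor <;> linarith [hr.1, hr.2]
  have hmapL : MapsTo (fun s : ℝ => L - s) (Icc 0 L) (Icc 0 L) := by
    intro r hr
    rw [mem_Icc] at hr
    simp only [mem_Icc]
    constructor <;> linarith [hr.1, hr.2]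
  have hυc' : ContinuousOn υ' (Icc 0 M) :=
    hυc.comp (by fun_prop : ContinuousOn (fun r : ℝ => M - r) (Icc 0 M)) hmapM
  have hυi' : InjOn υ' (Icc 0 M) := by
    intro r1 h1 r2 h2 heq
    have := hυi (hmapM h1) (hmapM h2) heq
    simp only at this
    linarith
  have himgIcc : υ' '' Icc 0 M = υ '' Icc 0 M := by
    rw [show υ' = υ ∘ (fun r => M - r) from rfl, image_comp, image_const_sub_Icc]
    norm_num
  have himgIoo : υ' '' Ioo 0 M = υ '' Ioo 0 M := by
    rw [show υ' = υ ∘ (fun r => M - r) from rfl, image_comp, image_const_sub_Ioo]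
    norm_num
  have hΥ' : Υ = υ' '' Icc 0 M := by rw [himgIcc]; exact hΥ
  have ha' : υ' M = b := by simp only [hυ', sub_self, hbb]
  have hbb' : υ' 0 = a := by simp only [hυ', sub_zero, ha]
  have hxpc' : ContinuousOn xp' (Icc 0 L) :=
    hxpc.comp (by fun_prop : ContinuousOn (fun s : ℝ => L - s) (Icc 0 L)) hmapL
  have hxpi' : InjOn xp' (Icc 0 L) := by
    intro r1 h1 r2 h2 heq
    have := hxpi (hmapL h1) (hmapL h2) heq
    simp only at this
    linarith
  have hxp0' : xp' 0 = b := by simp only [hxp', sub_zero, hxpL]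
  have hxpL' : xp' L = a := by simp only [hxp', sub_self, hxp0]
  have hxpim' : xp' '' Ioo 0 L = Γ := by
    rw [show xp' = xp ∘ (fun s => L - s) from rfl, image_comp, image_const_sub_Ioo]
    norm_num
    exact hxpim
  set Ba' : Set ℝ := {s ∈ Ioo (0:ℝ) L | infDist (xp' s) Υ = dist (xp' s) b} with hBa'
  have hBbsub : Bb ⊆ Ioo 0 L := by rw [hBb]; exact fun s hs => hs.1
  have hBane' : Ba'.Nonempty := by
    obtain ⟨t, ht⟩ := hBbne
    have htm := hBb ▸ ht
    refine ⟨L - t, ⟨by linarith [htm.1.2], by linarith [htm.1.1]⟩, ?_⟩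
    simp only [hxp', sub_sub_cancel]
    exact htm.2
  have hS' : S = {x ∈ Γ | ∃ y ∈ υ' '' Ioo 0 M, dist x y = infDist x Υ} := by
    rw [himgIoo]; exact hS
  obtain ⟨h1', h2'⟩ := master Ω hΩo hb hne hsc M hM υ' hυc' hυi' Υ hΥ' hΥsub b a ha' hbb' Γ hΓ
    L hL xp' hxpc' hxpi' hxp0' hxpL' hxpim' Ba' hBa' hBane' S hS'
  -- translate the reflected results
  have hBaim : Ba' = (fun s => L - s) '' Bb := by
    ext s
    constructor
    · rintro ⟨hsIoo, hcond⟩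
      refine ⟨L - s, ?_, by ring⟩
      rw [hBb]
      refine ⟨⟨by linarith [hsIoo.2], by linarith [hsIoo.1]⟩, ?_⟩
      simpa only [hxp'] using hcond
    · rintro ⟨t, htBb, rfl⟩
      have htm := hBb ▸ htBb
      refine ⟨⟨by simp only; linarith [htm.1.2], by simp only; linarith [htm.1.1]⟩, ?_⟩
      simp only [hxp', sub_sub_cancel]
      exact htm.2
  have hBbbddB : BddBelow Bb := ⟨0, fun t ht => (hBbsub ht).1.le⟩
  have hsup_eq : sSup Ba' = L - sInf Bb := by
    rw [hBaim, refl_sSup L hBbne hBbbddB]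
  have hinfBb : sInf Bb ∈ Bb := by
    have hmem := h1'
    rw [hsup_eq] at hmem
    obtain ⟨hIoo, hcond⟩ := hmem
    have hgoal : sInf Bb ∈ {s ∈ Ioo (0:ℝ) L | infDist (xp s) Υ = dist (xp s) b} := by
      refine ⟨⟨by linarith [hIoo.2], by linarith [hIoo.1]⟩, ?_⟩
      simpa only [hxp', sub_sub_cancel] using hcond
    exact hBb.symm ▸ hgoal
  refine ⟨h1, hinfBb, fun hSne => ⟨h2 hSne, ?_⟩⟩
  -- second equality
  set T : Set ℝ := {s ∈ Ioo (0:ℝ) L | xp s ∈ S} with hT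
  have hTne : T.Nonempty := by
    obtain ⟨x, hx⟩ := hSne
    have hxΓ : x ∈ Γ := (hS ▸ hx).1
    obtain ⟨s, hs, rfl⟩ := hxpim ▸ hxΓ
    exact ⟨s, hs, hx⟩
  have hTbdd : BddAbove T := ⟨L, fun t ht => ht.1.2.le⟩
  have hT'im : {s ∈ Ioo (0:ℝ) L | xp' s ∈ S} = (fun s => L - s) '' T := by
    ext s
    constructor
    · rintro ⟨hsIoo, hcond⟩
      refine ⟨L - s, ⟨⟨by linarith [hsIoo.2], by linarith [hsIoo.1]⟩, ?_⟩, by ring⟩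
      simpa only [hxp'] using hcond
    · rintro ⟨t, htT, rfl⟩
      refine ⟨⟨by simp only; linarith [htT.1.2], by simp only; linarith [htT.1.1]⟩, ?_⟩
      simp only [hxp', sub_sub_cancel]
      exact htT.2
  have := h2' hSne
  rw [hT'im, refl_sInf L hTne hTbdd, hsup_eq] at this
  linarith

end
end
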